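/- arXiv:2102.03209 — 6 statements merged into one kernel-verified Lean document; each statement's English description precedes it below -/
import Mathlib

section
/- Let η > 0, s ≥ 1, ω₀ = 1 + η/s², and ω₁ = T_s(ω₀)/T_s'(ω₀). Then ω₁ s² ≤ e^η. -/
open Polynomial Polynomial.Chebyshev

lemma T_real_cosh (t : ℝ) (n : ℤ) : (Chebyshev.T ℝ n).eval (Real.cosh t) = Real.cosh (n * t) := by
  have h := T_complex_cos ((t : ℂ) * Complex.I) n
  rw [Complex.cos_mul_I, ← mul_assoc, show ((n : ℂ) * t) = (((n : ℝ) * t : ℝ) : ℂ) by push_cast; ring,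
    Complex.cos_mul_I] at h
  exact_mod_cast h

lemma U_real_sinh (t : ℝ) (n : ℤ) :
    (Chebyshev.U ℝ n).eval (Real.cosh t) * Real.sinh t = Real.sinh ((n + 1) * t) := by
  have h := U_complex_cos ((t : ℂ) * Complex.I) n
  rw [Complex.cos_mul_I, Complex.sin_mul_I, ← mul_assoc,
    show (((n : ℂ) + 1) * ((t : ℂ) * Complex.I)) = ((((n : ℝ) + 1) * t : ℝ) : ℂ) * Complex.I by
      push_cast; ring,
    Complex.sin_mul_I] at h
  have h2 := mul_right_cancel₀ Complex.I_ne_zero h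
  exact_mod_cast h2

lemma sinh_mul_ge (n : ℕ) (t : ℝ) (ht : 0 ≤ t) : (n : ℝ) * Real.sinh t ≤ Real.sinh (n * t) := by
  induction n with
  | zero => simp
  | succ n ih =>
    have h1 : Real.sinh ((↑(n + 1) : ℝ) * t) = Real.sinh ((n : ℝ) * t) * Real.cosh t
        + Real.cosh ((n : ℝ) * t) * Real.sinh t := by
      push_cast; rw [add_mul, one_mul, Real.sinh_add]
    rw [h1]
    push_cast
    have hs := Real.sinh_nonneg_iff.2 ht
    have hsn := Real.sinh_nonneg_iff.2 (by positivity : (0:ℝ) ≤ (n:ℝ) * t)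
    nlinarith [Real.one_le_cosh t, Real.one_le_cosh ((n:ℝ)*t)]

lemma tanh_mul_le (n : ℕ) (t : ℝ) (ht : 0 ≤ t) :
    Real.sinh ((n : ℝ) * t) * Real.cosh t ≤ (n : ℝ) * Real.sinh t * Real.cosh ((n : ℝ) * t) := by
  induction n with
  | zero => simp
  | succ n ih =>
    have h1 : Real.sinh ((↑(n + 1) : ℝ) * t) = Real.sinh ((n : ℝ) * t) * Real.cosh t
        + Real.cosh ((n : ℝ) * t) * Real.sinh t := by
      push_cast; rw [add_mul, one_mul, Real.sinh_add]
    have h2 : Real.cosh ((↑(n + 1) : ℝ) * t) = Real.cosh ((n : ℝ) * t) * Real.cosh t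
        + Real.sinh ((n : ℝ) * t) * Real.sinh t := by
      push_cast; rw [add_mul, one_mul, Real.cosh_add]
    rw [h1, h2]
    push_cast
    have hs := Real.sinh_nonneg_iff.2 ht
    have hsn := Real.sinh_nonneg_iff.2 (by positivity : (0:ℝ) ≤ (n:ℝ) * t)
    nlinarith [mul_le_mul_of_nonneg_right ih (Real.cosh_pos t).le,
      mul_nonneg (mul_nonneg hs hsn) hs,
      mul_nonneg (mul_nonneg hs (Real.cosh_pos ((n:ℝ)*t)).le) (Real.cosh_pos t).le]

lemma cosh_mul_le (n : ℕ) (t : ℝ) (ht : 0 ≤ t) :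
    Real.cosh ((n : ℝ) * t) ≤ Real.cosh t ^ (n ^ 2) := by
  induction n with
  | zero => simp
  | succ n ih =>
    have h2 : Real.cosh ((↑(n + 1) : ℝ) * t) = Real.cosh ((n : ℝ) * t) * Real.cosh t
        + Real.sinh ((n : ℝ) * t) * Real.sinh t := by
      push_cast; rw [add_mul, one_mul, Real.cosh_add]
    have hs := Real.sinh_nonneg_iff.2 ht
    have hsn := Real.sinh_nonneg_iff.2 (by positivity : (0:ℝ) ≤ (n:ℝ) * t)
    have hC := Real.one_le_cosh t
    have hCn := Real.cosh_pos ((n:ℝ)*t)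
    have htanh := tanh_mul_le n t ht
    -- sinh(nt) ≤ n sinh t cosh(nt)
    have hsinh : Real.sinh ((n:ℝ)*t) ≤ (n:ℝ) * Real.sinh t * Real.cosh ((n:ℝ)*t) := by
      nlinarith
    -- Bernoulli: (cosh t)^(2n) = (1 + sinh t^2)^n ≥ 1 + n sinh t ^ 2
    have hbern : 1 + (n:ℝ) * Real.sinh t ^ 2 ≤ Real.cosh t ^ (2 * n) := by
      have := one_add_mul_le_pow (a := Real.sinh t ^ 2) (by nlinarith) n
      calc 1 + (n:ℝ) * Real.sinh t ^ 2 ≤ (1 + Real.sinh t ^ 2) ^ n := this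
        _ = Real.cosh t ^ (2 * n) := by
            rw [pow_mul]; congr 1; rw [sq, sq]; nlinarith [Real.cosh_sq_sub_sinh_sq t]
    have hpow : Real.cosh t ^ (n^2) * (Real.cosh t + (n:ℝ) * Real.sinh t ^ 2)
        ≤ Real.cosh t ^ ((n+1)^2) := by
      have h3 : Real.cosh t + (n:ℝ) * Real.sinh t ^ 2 ≤ Real.cosh t ^ (2*n+1) := by
        calc Real.cosh t + (n:ℝ) * Real.sinh t ^ 2
            ≤ Real.cosh t * (1 + (n:ℝ) * Real.sinh t ^ 2) := by
              nlinarith [mul_nonneg (sub_nonneg.2 hC)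
                (mul_nonneg (Nat.cast_nonneg n : (0:ℝ) ≤ (n:ℝ)) (sq_nonneg (Real.sinh t)))]
          _ ≤ Real.cosh t * Real.cosh t ^ (2*n) := by nlinarith
          _ = Real.cosh t ^ (2*n+1) := by ring
      calc Real.cosh t ^ (n^2) * (Real.cosh t + (n:ℝ) * Real.sinh t ^ 2)
          ≤ Real.cosh t ^ (n^2) * Real.cosh t ^ (2*n+1) := by
            exact mul_le_mul_of_nonneg_left h3 (by positivity)
        _ = Real.cosh t ^ ((n+1)^2) := by rw [← pow_add]; ring_nf
    rw [h2]
    have hCn' : (0:ℝ) < Real.cosh t ^ (n^2) := by positivity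
    calc Real.cosh ((n:ℝ)*t) * Real.cosh t + Real.sinh ((n:ℝ)*t) * Real.sinh t
        ≤ Real.cosh t ^ (n^2) * Real.cosh t + (n:ℝ) * Real.sinh t ^ 2 * Real.cosh t ^ (n^2) := by
          nlinarith [mul_le_mul_of_nonneg_right ih (Real.cosh_pos t).le,
            mul_le_mul_of_nonneg_right hsinh hs,
            mul_le_mul_of_nonneg_left ih
              (mul_nonneg (Nat.cast_nonneg n : (0:ℝ) ≤ (n:ℝ)) (sq_nonneg (Real.sinh t)))]
      _ = Real.cosh t ^ (n^2) * (Real.cosh t + (n:ℝ) * Real.sinh t ^ 2) := by ring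
      _ ≤ Real.cosh t ^ ((n+1)^2) := hpow

/-- Let `η > 0`, `s ≥ 1`, `ω₀ = 1 + η/s²`, and `ω₁ = T_s(ω₀)/T_s'(ω₀)`. Then `ω₁ s² ≤ e^η`. -/
theorem omega_one_bound (η : ℝ) (hη : 0 < η) (s : ℕ) (hs : 1 ≤ s) (ω₀ ω₁ : ℝ)
    (hω₀ : ω₀ = 1 + η / (s : ℝ) ^ 2)
    (hω₁ : ω₁ = (Chebyshev.T ℝ (s : ℤ)).eval ω₀
      / ((Polynomial.derivative (Chebyshev.T ℝ (s : ℤ))).eval ω₀)) :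
    ω₁ * (s : ℝ) ^ 2 ≤ Real.exp η := by
  have hs0 : (0:ℝ) < (s:ℝ) := by exact_mod_cast hs
  have hs2 : (0:ℝ) < (s:ℝ)^2 := by positivity
  have hω₀1 : 1 < ω₀ := by rw [hω₀]; nlinarith [div_pos hη hs2]
  -- pick t with cosh t = ω₀, t > 0
  set x : ℝ := Real.sqrt (ω₀ ^ 2 - 1) with hx
  have hx2 : x ^ 2 = ω₀ ^ 2 - 1 := Real.sq_sqrt (by nlinarith)
  have hxpos : 0 < x := Real.sqrt_pos.2 (by nlinarith)
  set t : ℝ := Real.arsinh x with htdef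
  have hsinh : Real.sinh t = x := Real.sinh_arsinh x
  have htpos : 0 < t := Real.arsinh_pos_iff.2 hxpos
  have hcosh : Real.cosh t = ω₀ := by
    have h1 : Real.cosh t ^ 2 = ω₀ ^ 2 := by
      rw [Real.cosh_sq]; rw [hsinh, hx2]; ring
    have := Real.cosh_pos t
    nlinarith
  have hT : (Chebyshev.T ℝ (s : ℤ)).eval ω₀ = Real.cosh ((s:ℝ) * t) := by
    rw [← hcosh, _root_.T_real_cosh]; norm_num
  have hderiv : ((Polynomial.derivative (Chebyshev.T ℝ (s : ℤ))).eval ω₀) * Real.sinh t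
      = (s:ℝ) * Real.sinh ((s:ℝ) * t) := by
    rw [T_derivative_eq_U]
    have hU := U_real_sinh t ((s:ℤ) - 1)
    rw [← hcosh]
    simp only [eval_mul, eval_intCast]
    push_cast
    rw [mul_assoc, hU]
    norm_num
  have hst : 0 ≤ (s:ℝ) * t := by positivity
  have hsinhst : (s:ℝ) * Real.sinh t ≤ Real.sinh ((s:ℝ)*t) := sinh_mul_ge s t htpos.le
  have hsinhstpos : 0 < Real.sinh ((s:ℝ)*t) := Real.sinh_pos_iff.2 (by positivity)
  have hsinhtpos : 0 < Real.sinh t := Real.sinh_pos_iff.2 htpos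
  have hDpos : 0 < (Polynomial.derivative (Chebyshev.T ℝ (s : ℤ))).eval ω₀ := by
    have : ((Polynomial.derivative (Chebyshev.T ℝ (s : ℤ))).eval ω₀) * Real.sinh t > 0 := by
      rw [hderiv]; positivity
    nlinarith [mul_pos (mul_pos hs0 hsinhstpos) hsinhtpos]
  have hD2 : (s:ℝ)^2 ≤ (Polynomial.derivative (Chebyshev.T ℝ (s : ℤ))).eval ω₀ := by
    nlinarith [mul_le_mul_of_nonneg_left hsinhst hs0.le]
  have hcoshst : 0 < Real.cosh ((s:ℝ)*t) := Real.cosh_pos _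
  have step1 : ω₁ * (s:ℝ)^2 ≤ Real.cosh ((s:ℝ)*t) := by
    rw [hω₁, hT, div_mul_eq_mul_div, div_le_iff₀ hDpos]
    nlinarith
  have step2 : Real.cosh ((s:ℝ)*t) ≤ Real.exp η := by
    have h1 := cosh_mul_le s t htpos.le
    have h2 : ω₀ ≤ Real.exp (η / (s:ℝ)^2) := by
      rw [hω₀]; linarith [Real.add_one_le_exp (η / (s:ℝ)^2)]
    have h3 : Real.cosh t ^ (s^2) ≤ Real.exp (η / (s:ℝ)^2) ^ (s^2) := by
      apply pow_le_pow_left₀ (by rw [hcosh]; linarith) (by rw [hcosh]; exact h2)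
    have h4 : Real.exp (η / (s:ℝ)^2) ^ (s^2) = Real.exp η := by
      rw [← Real.exp_nat_mul]
      congr 1
      push_cast
      field_simp
    calc Real.cosh ((s:ℝ)*t) ≤ Real.cosh t ^ (s^2) := h1
      _ ≤ Real.exp (η / (s:ℝ)^2) ^ (s^2) := h3
      _ = Real.exp η := h4
  linarith
end

section
/- Let η > 0, s ≥ 1, ω₀ = 1 + η/s², ω₁ = T_s(ω₀)/T_s'(ω₀), and define A_s(z) = T_s(ω₀ + ω₁ z)/T_s(ω₀). Then for every complex z with |z| ≤ 1, one has |A_s(z)| ≤ e^{η + e^η}. -/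
open Polynomial Polynomial.Chebyshev

lemma sfb_cosh_pow {t : ℝ} (ht : 0 ≤ t) (n : ℕ) :
    Real.cosh (n * t) ≤ Real.cosh t ^ (n ^ 2) ∧
      Real.sinh (n * t) ≤ n * Real.sinh t * Real.cosh t ^ (n ^ 2) := by
  induction n with
  | zero => simp
  | succ n ih =>
    obtain ⟨ihc, ihs⟩ := ih
    have hC : 1 ≤ Real.cosh t := Real.one_le_cosh t
    have hC0 : (0:ℝ) ≤ Real.cosh t := by linarith
    have hS : 0 ≤ Real.sinh t := Real.sinh_nonneg_iff.mpr ht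
    have hSn : 0 ≤ Real.sinh (n * t) := Real.sinh_nonneg_iff.mpr (by positivity)
    have hCp : (0:ℝ) < Real.cosh t ^ (n ^ 2) := by positivity
    have hsq : Real.sinh t ^ 2 = Real.cosh t ^ 2 - 1 := Real.sinh_sq t
    have hsq1 : (0:ℝ) ≤ Real.cosh t ^ 2 - 1 := by nlinarith
    have heq : ((n:ℝ) + 1) * t = n * t + t := by ring
    have hbern : (1:ℝ) + n * (Real.cosh t ^ 2 - 1) ≤ (Real.cosh t ^ 2) ^ n := by
      have := one_add_mul_le_pow (a := Real.cosh t ^ 2 - 1) (by nlinarith) n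
      simpa using this
    have h1 : Real.cosh t ^ (2 * n + 1) = Real.cosh t * (Real.cosh t ^ 2) ^ n := by
      rw [← pow_mul]; ring
    have hkey : Real.cosh t + n * (Real.cosh t ^ 2 - 1) ≤ Real.cosh t ^ (2 * n + 1) := by
      have hb2 : Real.cosh t * (1 + n * (Real.cosh t ^ 2 - 1)) ≤ Real.cosh t ^ (2*n+1) := by
        rw [h1]; exact mul_le_mul_of_nonneg_left hbern hC0
      nlinarith [mul_nonneg (mul_nonneg (sub_nonneg.mpr hC) (n.cast_nonneg (α := ℝ))) hsq1]
    have hexp : (n + 1) ^ 2 = n ^ 2 + (2 * n + 1) := by ring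
    have hc1 : Real.cosh (n*t) * Real.cosh t ≤ Real.cosh t ^ (n^2) * Real.cosh t :=
      mul_le_mul_of_nonneg_right ihc hC0
    have hc2 : Real.sinh (n*t) * Real.sinh t ≤ (n * Real.sinh t * Real.cosh t ^ (n^2)) * Real.sinh t :=
      mul_le_mul_of_nonneg_right ihs hS
    constructor
    · push_cast
      rw [heq, Real.cosh_add]
      calc Real.cosh (n*t) * Real.cosh t + Real.sinh (n*t) * Real.sinh t
          ≤ Real.cosh t ^ (n^2) * (Real.cosh t + n * (Real.cosh t ^ 2 - 1)) := by
            have hc3 : (n:ℝ) * Real.sinh t * Real.cosh t ^ (n^2) * Real.sinh t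
                = n * (Real.cosh t ^ 2 - 1) * Real.cosh t ^ (n^2) := by rw [← hsq]; ring
            nlinarith
        _ ≤ Real.cosh t ^ (n^2) * Real.cosh t ^ (2*n+1) :=
            mul_le_mul_of_nonneg_left hkey hCp.le
        _ = Real.cosh t ^ ((n+1)^2) := by rw [← pow_add, hexp]
    · push_cast
      rw [heq, Real.sinh_add]
      have h2 : (1:ℝ) ≤ Real.cosh t ^ (2*n+1) := one_le_pow₀ hC
      have h3 : Real.cosh t ≤ Real.cosh t ^ (2*n+1) :=
        le_self_pow₀ hC (by omega)
      calc Real.sinh (n*t) * Real.cosh t + Real.cosh (n*t) * Real.sinh t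
          ≤ Real.sinh t * Real.cosh t ^ (n^2) * (n * Real.cosh t + 1) := by nlinarith
        _ ≤ Real.sinh t * Real.cosh t ^ (n^2) * ((n+1) * Real.cosh t ^ (2*n+1)) := by
            have : (n:ℝ) * Real.cosh t + 1 ≤ (n+1) * Real.cosh t ^ (2*n+1) := by nlinarith
            exact mul_le_mul_of_nonneg_left this (by positivity)
        _ = (n+1) * Real.sinh t * Real.cosh t ^ ((n+1)^2) := by rw [hexp, pow_add]; ring

lemma sfb_sinh_ge {t : ℝ} (ht : 0 ≤ t) (n : ℕ) : (n:ℝ) * Real.sinh t ≤ Real.sinh (n * t) := by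
  induction n with
  | zero => simp
  | succ n ih =>
    have hS : 0 ≤ Real.sinh t := Real.sinh_nonneg_iff.mpr ht
    have hSn : 0 ≤ Real.sinh (n * t) := Real.sinh_nonneg_iff.mpr (by positivity)
    have hC : 1 ≤ Real.cosh t := Real.one_le_cosh t
    have hCn : 1 ≤ Real.cosh (n * t) := Real.one_le_cosh _
    have heq : ((n:ℝ) + 1) * t = n * t + t := by ring
    push_cast
    rw [heq, Real.sinh_add]
    nlinarith

lemma sfb_abs_cos_le (θ : ℂ) : ‖Complex.cos θ‖ ≤ Real.cosh θ.im := by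
  have h := Complex.cos_eq θ
  have habs : ‖Complex.cos θ‖ ^ 2 =
      (Real.cos θ.re * Real.cosh θ.im) ^ 2 + (Real.sin θ.re * Real.sinh θ.im) ^ 2 := by
    rw [h, Complex.sq_norm, Complex.normSq_apply]
    simp [Complex.sub_re, Complex.sub_im, Complex.mul_re, Complex.mul_im,
      Complex.cos_ofReal_re, Complex.sin_ofReal_re, Complex.cosh_ofReal_re,
      Complex.sinh_ofReal_re, Complex.cos_ofReal_im, Complex.sin_ofReal_im,
      Complex.cosh_ofReal_im, Complex.sinh_ofReal_im]
    ring
  have h1 : Real.sin θ.re ^ 2 + Real.cos θ.re ^ 2 = 1 := Real.sin_sq_add_cos_sq _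
  have h2 : Real.cosh θ.im ^ 2 = 1 + Real.sinh θ.im ^ 2 := Real.cosh_sq' _
  have h3 : 0 ≤ ‖Complex.cos θ‖ := norm_nonneg _
  have h4 : 0 < Real.cosh θ.im := Real.cosh_pos _
  nlinarith [habs]

lemma sfb_cosh_im_le (θ : ℂ) : Real.cosh θ.im ≤ 1 + ‖1 - Complex.cos θ‖ := by
  have h := Complex.cos_eq θ
  have habs : ‖1 - Complex.cos θ‖ ^ 2 =
      (Real.cosh θ.im - Real.cos θ.re) ^ 2 := by
    rw [h, Complex.sq_norm, Complex.normSq_apply]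
    simp [Complex.sub_re, Complex.sub_im, Complex.mul_re, Complex.mul_im,
      Complex.cos_ofReal_re, Complex.sin_ofReal_re, Complex.cosh_ofReal_re,
      Complex.sinh_ofReal_re, Complex.cos_ofReal_im, Complex.sin_ofReal_im,
      Complex.cosh_ofReal_im, Complex.sinh_ofReal_im]
    have h1 : Real.sin θ.re ^ 2 + Real.cos θ.re ^ 2 = 1 := Real.sin_sq_add_cos_sq _
    have h2 : Real.cosh θ.im ^ 2 = 1 + Real.sinh θ.im ^ 2 := Real.cosh_sq' _
    nlinarith
  have h3 : 0 ≤ ‖1 - Complex.cos θ‖ := norm_nonneg _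
  have h4 : 1 ≤ Real.cosh θ.im := Real.one_le_cosh _
  have h5 : Real.cos θ.re ≤ 1 := Real.cos_le_one _
  nlinarith [habs]


/-- Let `η > 0`, `s ≥ 1`, `ω₀ = 1 + η/s²`, `ω₁ = T_s(ω₀)/T_s'(ω₀)`, and
`A_s(z) = T_s(ω₀ + ω₁ z)/T_s(ω₀)`. Then for every complex `z` with `|z| ≤ 1`,
`|A_s(z)| ≤ exp (η + exp η)`. -/
theorem stability_function_bound_on_disc (η : ℝ) (hη : 0 < η) (s : ℕ) (hs : 1 ≤ s)
    (ω₀ ω₁ : ℝ) (hω₀ : ω₀ = 1 + η / (s : ℝ) ^ 2)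
    (hω₁ : ω₁ = (Chebyshev.T ℝ (s : ℤ)).eval ω₀
      / ((Polynomial.derivative (Chebyshev.T ℝ (s : ℤ))).eval ω₀))
    (A : ℂ → ℂ)
    (hA : ∀ z : ℂ, A z = (Chebyshev.T ℂ (s : ℤ)).eval ((ω₀ : ℂ) + (ω₁ : ℂ) * z)
      / (Chebyshev.T ℂ (s : ℤ)).eval (ω₀ : ℂ)) :
    ∀ z : ℂ, ‖z‖ ≤ 1 → ‖A z‖ ≤ Real.exp (η + Real.exp η) := by
  intro z hz
  have hsR : (1:ℝ) ≤ (s:ℝ) := by exact_mod_cast hs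
  have hs2 : (0:ℝ) < (s:ℝ)^2 := by positivity
  have hη2 : 0 < η / (s:ℝ)^2 := div_pos hη hs2
  have hω₀1 : 1 < ω₀ := by rw [hω₀]; linarith
  have hω₀pos : (0:ℝ) < ω₀ := by linarith
  set x := Real.sqrt (ω₀^2 - 1) with hxdef
  have hx2 : x^2 = ω₀^2 - 1 := Real.sq_sqrt (by nlinarith)
  have hxpos : 0 < x := Real.sqrt_pos.mpr (by nlinarith)
  set t₀ := Real.arsinh x with ht₀def
  have hsinh : Real.sinh t₀ = x := Real.sinh_arsinh x
  have hcosh : Real.cosh t₀ = ω₀ := by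
    rw [ht₀def, Real.cosh_arsinh, show 1 + x^2 = ω₀^2 by linarith]
    exact Real.sqrt_sq hω₀pos.le
  have ht₀pos : 0 < t₀ := Real.arsinh_pos_iff.mpr hxpos
  have hst₀pos : 0 < (s:ℝ) * t₀ := by positivity
  have hsinhX : 0 < Real.sinh ((s:ℝ) * t₀) := Real.sinh_pos_iff.mpr hst₀pos
  -- complex identity for ω₀
  have hωcos : (ω₀ : ℂ) = Complex.cos ((t₀:ℂ) * Complex.I) := by
    rw [Complex.cos_mul_I, ← Complex.ofReal_cosh, hcosh]
  -- T eval over ℂ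
  have hTC : (Chebyshev.T ℂ (s:ℤ)).eval (ω₀:ℂ) = (Real.cosh ((s:ℝ) * t₀) : ℂ) := by
    rw [hωcos, T_complex_cos]
    rw [show ((s:ℤ):ℂ) * ((t₀:ℂ) * Complex.I) = (((s:ℝ) * t₀ : ℝ):ℂ) * Complex.I by
      push_cast; ring]
    rw [Complex.cos_mul_I, Complex.ofReal_cosh]
  have hTR : (Chebyshev.T ℝ (s:ℤ)).eval ω₀ = Real.cosh ((s:ℝ) * t₀) := by
    have := complex_ofReal_eval_T ω₀ (s:ℤ)
    rw [hTC] at this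
    exact_mod_cast this
  -- U eval
  have hUC : (Chebyshev.U ℂ ((s:ℤ)-1)).eval (ω₀:ℂ) * ((x:ℂ) * Complex.I)
      = (Real.sinh ((s:ℝ) * t₀) : ℂ) * Complex.I := by
    have h := U_complex_cos ((t₀:ℂ) * Complex.I) ((s:ℤ)-1)
    rw [← hωcos] at h
    rw [show ((x:ℂ) * Complex.I) = Complex.sin ((t₀:ℂ) * Complex.I) by
      rw [Complex.sin_mul_I, ← Complex.ofReal_sinh, hsinh]]
    rw [h, show ((((s:ℤ)-1 : ℤ):ℂ) + 1) * ((t₀:ℂ) * Complex.I)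
        = (((s:ℝ)*t₀ : ℝ):ℂ) * Complex.I by push_cast; ring]
    rw [Complex.sin_mul_I, Complex.ofReal_sinh]
  have hUR : (Chebyshev.U ℝ ((s:ℤ)-1)).eval ω₀ * x = Real.sinh ((s:ℝ) * t₀) := by
    have h2 : (((Chebyshev.U ℝ ((s:ℤ)-1)).eval ω₀ * x : ℝ) : ℂ)
        = ((Real.sinh ((s:ℝ) * t₀) : ℝ) : ℂ) := by
      apply mul_right_cancel₀ Complex.I_ne_zero
      push_cast [complex_ofReal_eval_U]
      rw [mul_assoc, hUC]
      push_cast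
      ring
    exact_mod_cast h2
  have hT'R : (Polynomial.derivative (Chebyshev.T ℝ (s:ℤ))).eval ω₀
      = (s:ℝ) * (Real.sinh ((s:ℝ) * t₀) / x) := by
    rw [T_derivative_eq_U]
    rw [Polynomial.eval_mul]
    have hxne : x ≠ 0 := ne_of_gt hxpos
    have : (Chebyshev.U ℝ ((s:ℤ)-1)).eval ω₀ = Real.sinh ((s:ℝ) * t₀) / x := by
      field_simp [← hUR]
      exact hUR
    rw [this]
    simp
  have hT'pos : 0 < (s:ℝ) * (Real.sinh ((s:ℝ) * t₀) / x) := by positivity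
  have hω₁val : ω₁ = Real.cosh ((s:ℝ) * t₀) * x / ((s:ℝ) * Real.sinh ((s:ℝ) * t₀)) := by
    rw [hω₁, hTR, hT'R]
    field_simp
  have hω₁pos : 0 < ω₁ := by rw [hω₁val]; positivity
  -- cosh (s t₀) ≤ exp η
  have hcoshpow : Real.cosh ((s:ℝ) * t₀) ≤ Real.cosh t₀ ^ (s^2) :=
    (sfb_cosh_pow ht₀pos.le s).1
  have hexpη : Real.cosh ((s:ℝ) * t₀) ≤ Real.exp η := by
    have h1 : Real.cosh t₀ ^ (s^2) ≤ Real.exp (η/(s:ℝ)^2) ^ (s^2) := by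
      apply pow_le_pow_left₀ (by positivity)
      rw [hcosh, hω₀]
      linarith [Real.add_one_le_exp (η/(s:ℝ)^2)]
    have h2 : Real.exp (η/(s:ℝ)^2) ^ (s^2) = Real.exp η := by
      rw [← Real.exp_nat_mul]
      congr 1
      push_cast
      field_simp
    linarith
  -- s² ω₁ ≤ exp η
  have hsge : (s:ℝ) * Real.sinh t₀ ≤ Real.sinh ((s:ℝ) * t₀) := sfb_sinh_ge ht₀pos.le s
  have hs2ω₁ : (s:ℝ)^2 * ω₁ ≤ Real.exp η := by
    have hle : (s:ℝ)^2 * ω₁ ≤ Real.cosh ((s:ℝ) * t₀) := by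
      have hsne : (s:ℝ) ≠ 0 := by positivity
      have he : (s:ℝ)^2 * ω₁
          = ((s:ℝ) * x) * Real.cosh ((s:ℝ) * t₀) / Real.sinh ((s:ℝ) * t₀) := by
        rw [hω₁val]; field_simp
      rw [he, div_le_iff₀ hsinhX]
      have hsx : (s:ℝ) * x ≤ Real.sinh ((s:ℝ) * t₀) := by rw [← hsinh]; exact hsge
      have hc : 0 < Real.cosh ((s:ℝ) * t₀) := Real.cosh_pos _
      nlinarith
    linarith
  -- bound on |w - 1|
  set D : ℝ := η/(s:ℝ)^2 + ω₁ with hDdef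
  have hD : ‖(↑ω₀ + ↑ω₁ * z) - 1‖ ≤ D := by
    have : (↑ω₀ + ↑ω₁ * z) - 1 = ((ω₀ - 1 : ℝ):ℂ) + (ω₁:ℂ) * z := by push_cast; ring
    rw [this]
    calc ‖((ω₀ - 1 : ℝ):ℂ) + (ω₁:ℂ) * z‖
        ≤ ‖((ω₀ - 1 : ℝ):ℂ)‖ + ‖(ω₁:ℂ) * z‖ := norm_add_le _ _
      _ ≤ (ω₀ - 1) + ω₁ * 1 := by
          rw [norm_mul, Complex.norm_real, Complex.norm_real, Real.norm_eq_abs, Real.norm_eq_abs,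
            abs_of_pos (show (0:ℝ) < ω₀ - 1 by linarith), abs_of_pos hω₁pos]
          exact add_le_add le_rfl (mul_le_mul_of_nonneg_left hz hω₁pos.le)
      _ = D := by rw [hDdef, hω₀]; ring
  have hs2D : (s:ℝ)^2 * D = η + (s:ℝ)^2 * ω₁ := by
    rw [hDdef]
    field_simp
  -- numerator bound
  have hnum : ‖(Chebyshev.T ℂ (s:ℤ)).eval ((ω₀:ℂ) + (ω₁:ℂ) * z)‖
      ≤ Real.exp (η + Real.exp η) := by
    obtain ⟨θ, hθ⟩ := Complex.cos_surjective ((ω₀:ℂ) + (ω₁:ℂ) * z)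
    rw [← hθ, T_complex_cos]
    have him : (((s:ℤ):ℂ) * θ).im = (s:ℝ) * θ.im := by
      simp [Complex.mul_im]
    have h1 : ‖Complex.cos (((s:ℤ):ℂ) * θ)‖ ≤ Real.cosh ((s:ℝ) * θ.im) := by
      have := sfb_abs_cos_le (((s:ℤ):ℂ) * θ)
      rwa [him] at this
    have h2 : Real.cosh ((s:ℝ) * θ.im) = Real.cosh ((s:ℝ) * |θ.im|) := by
      rw [← Real.cosh_abs, abs_mul, abs_of_nonneg (by positivity : (0:ℝ) ≤ (s:ℝ))]
    have h3 : Real.cosh ((s:ℝ) * |θ.im|) ≤ Real.cosh |θ.im| ^ (s^2) :=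
      (sfb_cosh_pow (abs_nonneg _) s).1
    have h4 : Real.cosh θ.im ≤ 1 + D := by
      have := sfb_cosh_im_le θ
      have habs : ‖1 - Complex.cos θ‖ = ‖Complex.cos θ - 1‖ := by
        rw [← neg_sub (Complex.cos θ) 1, norm_neg]
      rw [habs, hθ] at this
      linarith [hD]
    have h5 : Real.cosh |θ.im| ^ (s^2) ≤ (1 + D) ^ (s^2) := by
      apply pow_le_pow_left₀ (by positivity)
      rw [Real.cosh_abs]; exact h4
    have h6 : (1 + D) ^ (s^2) ≤ Real.exp D ^ (s^2) := by
      apply pow_le_pow_left₀ (by positivity)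
      linarith [Real.add_one_le_exp D]
    have h7 : Real.exp D ^ (s^2) = Real.exp ((s:ℝ)^2 * D) := by
      rw [← Real.exp_nat_mul]; push_cast; ring_nf
    have h8 : Real.exp ((s:ℝ)^2 * D) ≤ Real.exp (η + Real.exp η) := by
      rw [Real.exp_le_exp, hs2D]
      linarith
    calc ‖Complex.cos (((s:ℤ):ℂ) * θ)‖ ≤ Real.cosh ((s:ℝ) * θ.im) := h1
      _ = Real.cosh ((s:ℝ) * |θ.im|) := h2
      _ ≤ Real.cosh |θ.im| ^ (s^2) := h3
      _ ≤ (1 + D) ^ (s^2) := h5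
      _ ≤ Real.exp D ^ (s^2) := h6
      _ = Real.exp ((s:ℝ)^2 * D) := h7
      _ ≤ Real.exp (η + Real.exp η) := h8
  -- combine
  rw [hA, norm_div, hTC]
  rw [Complex.norm_real, Real.norm_eq_abs, abs_of_pos (Real.cosh_pos _)]
  have hden : 1 ≤ Real.cosh ((s:ℝ) * t₀) := Real.one_le_cosh _
  calc ‖(Chebyshev.T ℂ (s:ℤ)).eval ((ω₀:ℂ) + (ω₁:ℂ) * z)‖ / Real.cosh ((s:ℝ) * t₀)
      ≤ ‖(Chebyshev.T ℂ (s:ℤ)).eval ((ω₀:ℂ) + (ω₁:ℂ) * z)‖ :=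
        div_le_self (norm_nonneg _) hden
    _ ≤ Real.exp (η + Real.exp η) := hnum
end

section
/- Let η > 0, s ≥ 1, ω₀ = 1 + η/s², ω₁ = T_s(ω₀)/T_s'(ω₀), and define A_s(z) = T_s(ω₀ + ω₁ z)/T_s(ω₀) and B_s(z) = (A_s(z) − 1)/z. Then sup_{|z| ≤ 1, z ∈ ℂ, z ≠ 0} |B_s(z)| ≤ 1 + e^{η + e^η}. -/
open Polynomial Polynomial.Chebyshev

-- L0: sinh t ≤ t * cosh t for 0 ≤ t
lemma my_sinh_le_mul_cosh {t : ℝ} (ht : 0 ≤ t) : Real.sinh t ≤ t * Real.cosh t := by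
  have key : MonotoneOn (fun x : ℝ => x * Real.cosh x - Real.sinh x) (Set.Ici 0) := by
    apply monotoneOn_of_deriv_nonneg (convex_Ici 0)
    · exact (((continuous_id.mul Real.continuous_cosh).sub Real.continuous_sinh)).continuousOn
    · exact (((differentiable_id.mul Real.differentiable_cosh).sub
        Real.differentiable_sinh)).differentiableOn
    · intro x hx
      have hd : HasDerivAt (fun x : ℝ => x * Real.cosh x - Real.sinh x)
          (1 * Real.cosh x + x * Real.sinh x - Real.cosh x) x :=
        ((hasDerivAt_id' x).mul (Real.hasDerivAt_cosh x)).sub (Real.hasDerivAt_sinh x)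
      rw [hd.deriv]
      have : 0 ≤ x := le_of_lt (by simpa using hx)
      have := Real.sinh_nonneg_iff.2 this
      nlinarith
  have := key (Set.self_mem_Ici) (Set.mem_Ici.2 ht) ht
  simp at this
  linarith

-- L1: 1 + t²/2 ≤ cosh t
lemma my_one_add_sq_le_cosh (t : ℝ) : 1 + t ^ 2 / 2 ≤ Real.cosh t := by
  wlog h : 0 ≤ t with H
  · have := H (-t) (by linarith [le_of_not_ge h])
    simpa using this
  have h1 : Real.cosh t = 1 + 2 * Real.sinh (t / 2) ^ 2 := by
    have := Real.cosh_two_mul (t / 2)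
    have h2 := Real.cosh_sq (t / 2)
    rw [(by ring : 2 * (t / 2) = t)] at this
    rw [this, h2]; ring
  have h3 : t / 2 ≤ Real.sinh (t / 2) := Real.self_le_sinh_iff.2 (by linarith)
  nlinarith [Real.sinh_nonneg_iff.2 (by linarith : (0:ℝ) ≤ t / 2)]

-- L2: cosh √a + b/2 ≤ cosh √(a+b)
lemma my_cosh_sqrt {a b : ℝ} (ha : 0 ≤ a) (hb : 0 ≤ b) :
    Real.cosh (Real.sqrt a) + b / 2 ≤ Real.cosh (Real.sqrt (a + b)) := by
  set p := Real.sqrt a with hp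
  set q := Real.sqrt (a + b) - p with hq
  have hpn : 0 ≤ p := Real.sqrt_nonneg a
  have hqn : 0 ≤ q := by
    have := Real.sqrt_le_sqrt (by linarith : a ≤ a + b)
    simp [hq]; linarith
  have hpq : (p + q) ^ 2 = a + b := by
    have : p + q = Real.sqrt (a + b) := by simp [hq]
    rw [this, Real.sq_sqrt (by linarith)]
  have hp2 : p ^ 2 = a := Real.sq_sqrt ha
  have hab : Real.sqrt (a + b) = p + q := by simp [hq]
  rw [hab, Real.cosh_add]
  have h1 : 1 + q ^ 2 / 2 ≤ Real.cosh q := my_one_add_sq_le_cosh q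
  have h2 : q ≤ Real.sinh q := Real.self_le_sinh_iff.2 hqn
  have h3 : p ≤ Real.sinh p := Real.self_le_sinh_iff.2 hpn
  have h4 : 1 ≤ Real.cosh p := Real.one_le_cosh p
  have h5 : q ^ 2 + 2 * p * q = b := by nlinarith
  nlinarith [Real.sinh_nonneg_iff.2 hqn, Real.sinh_nonneg_iff.2 hpn]



-- L3: key comparison
lemma my_cosh_compare {x y c : ℝ} (hx : 0 ≤ x) (hxy : x ≤ y) (hc : y ^ 2 ≤ x ^ 2 + 2 * c) :
    Real.cosh y ≤ Real.exp c * Real.cosh x := by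
  set d := y - x with hd
  have hdn : 0 ≤ d := by linarith
  have hy : y = x + d := by ring
  rw [hy, Real.cosh_add]
  have h1 : Real.sinh x ≤ x * Real.cosh x := my_sinh_le_mul_cosh hx
  have h2 : Real.sinh d ≤ d * Real.cosh d := my_sinh_le_mul_cosh hdn
  have hcx : 0 < Real.cosh x := Real.cosh_pos x
  have hcd : 0 < Real.cosh d := Real.cosh_pos d
  have hsx : 0 ≤ Real.sinh x := Real.sinh_nonneg_iff.2 hx
  have hsd : 0 ≤ Real.sinh d := Real.sinh_nonneg_iff.2 hdn
  have step1 : Real.cosh x * Real.cosh d + Real.sinh x * Real.sinh d ≤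
      Real.cosh x * Real.cosh d * (1 + x * d) := by nlinarith
  have step2 : Real.cosh d * (1 + x * d) ≤ Real.exp c := by
    have e1 : Real.cosh d ≤ Real.exp (d ^ 2 / 2) := Real.cosh_le_exp_half_sq d
    have e2 : 1 + x * d ≤ Real.exp (x * d) := by
      have := Real.add_one_le_exp (x * d); linarith
    have e3 : Real.cosh d * (1 + x * d) ≤ Real.exp (d ^ 2 / 2) * Real.exp (x * d) := by
      have h1xd : (0:ℝ) ≤ 1 + x * d := by positivity
      exact mul_le_mul e1 e2 h1xd (Real.exp_nonneg _)
    rw [← Real.exp_add] at e3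
    refine e3.trans (Real.exp_le_exp.2 ?_)
    nlinarith
  calc Real.cosh x * Real.cosh d + Real.sinh x * Real.sinh d
      ≤ Real.cosh x * Real.cosh d * (1 + x * d) := step1
    _ = Real.cosh x * (Real.cosh d * (1 + x * d)) := by ring
    _ ≤ Real.cosh x * Real.exp c := by
        exact mul_le_mul_of_nonneg_left step2 hcx.le
    _ = Real.exp c * Real.cosh x := by ring

-- L6: arcosh existence
lemma my_exists_cosh_eq {u : ℝ} (hu : 1 ≤ u) : ∃ φ : ℝ, 0 ≤ φ ∧ Real.cosh φ = u := by
  set v := u + Real.sqrt (u ^ 2 - 1) with hv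
  have hs : Real.sqrt (u ^ 2 - 1) ^ 2 = u ^ 2 - 1 :=
    Real.sq_sqrt (by nlinarith)
  have hsn : 0 ≤ Real.sqrt (u ^ 2 - 1) := Real.sqrt_nonneg _
  have hv1 : 1 ≤ v := by rw [hv]; linarith
  have hvpos : 0 < v := by linarith
  refine ⟨Real.log v, Real.log_nonneg hv1, ?_⟩
  rw [Real.cosh_eq, Real.exp_log hvpos, Real.exp_neg, Real.exp_log hvpos]
  rw [inv_eq_one_div]
  field_simp
  nlinarith

-- L5: Chebyshev T at cosh
lemma my_T_cosh (n : ℤ) (t : ℝ) :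
    (Chebyshev.T ℝ n).eval (Real.cosh t) = Real.cosh (n * t) := by
  have h0 : (((Chebyshev.T ℝ n).eval (Real.cosh t) : ℝ) : ℂ) =
      ((Real.cosh (n * t) : ℝ) : ℂ) := by
    rw [complex_ofReal_eval_T, Complex.ofReal_cosh, Complex.ofReal_cosh]
    rw [← Complex.cos_mul_I, ← Complex.cos_mul_I, T_complex_cos]
    push_cast
    ring_nf
  exact_mod_cast h0


-- recurrence for taylor shifts of Chebyshev
lemma my_taylor_rec (r : ℝ) (m : ℤ) :
    taylor r (Chebyshev.T ℝ (m+2)) =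
      Polynomial.C 2 * (X + Polynomial.C r) * taylor r (Chebyshev.T ℝ (m+1))
        - taylor r (Chebyshev.T ℝ m) := by
  rw [Chebyshev.T_add_two]
  simp only [taylor_apply, Polynomial.sub_comp, Polynomial.mul_comp, Polynomial.X_comp,
    Polynomial.ofNat_comp]
  have h2 : Polynomial.C (2:ℝ) = 2 := map_ofNat _ 2
  rw [h2]
  push_cast
  ring

lemma my_coeff_aux (q : ℝ[X]) (r : ℝ) (k : ℕ) :
    (Polynomial.C 2 * (X + Polynomial.C r) * q).coeff k
      = 2 * (X * q).coeff k + 2 * r * q.coeff k := by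
  have h : Polynomial.C 2 * (X + Polynomial.C r) * q
      = Polynomial.C 2 * (X * q) + Polynomial.C (2 * r) * q := by
    rw [Polynomial.C_mul]; ring
  rw [h, Polynomial.coeff_add, Polynomial.coeff_C_mul, Polynomial.coeff_C_mul]

lemma my_coeff_X_mul_nonneg (q : ℝ[X]) (hq : ∀ k, 0 ≤ q.coeff k) (k : ℕ) :
    0 ≤ (X * q).coeff k := by
  cases k with
  | zero => rw [Polynomial.mul_coeff_zero, Polynomial.coeff_X_zero, zero_mul]
  | succ k => rw [Polynomial.coeff_X_mul]; exact hq k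

lemma my_coeff_X_mul_one (q : ℝ[X]) : (X * q).coeff 1 = q.coeff 0 :=
  Polynomial.coeff_X_mul q 0

/-- Master induction on taylor coefficients of Chebyshev polynomials. -/
lemma my_cheb_taylor (r : ℝ) (hr : 1 ≤ r) : ∀ n : ℕ,
    (∀ k, 0 ≤ (taylor r (Chebyshev.T ℝ (n : ℤ))).coeff k) ∧
    (∀ k, (taylor r (Chebyshev.T ℝ (n : ℤ))).coeff k
        ≤ (taylor r (Chebyshev.T ℝ ((n : ℤ) + 1))).coeff k) ∧
    (1 ≤ (taylor r (Chebyshev.T ℝ (n : ℤ))).coeff 0) ∧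
    ((n : ℝ) ^ 2 ≤ (taylor r (Chebyshev.T ℝ (n : ℤ))).coeff 1) ∧
    ((taylor r (Chebyshev.T ℝ (n : ℤ))).coeff 1 + (2 * (n : ℝ) + 1)
        ≤ (taylor r (Chebyshev.T ℝ ((n : ℤ) + 1))).coeff 1) := by
  intro n
  induction n with
  | zero =>
    have h0 : Chebyshev.T ℝ ((0 : ℕ) : ℤ) = 1 := by
      norm_num [Chebyshev.T_zero]
    have h1 : Chebyshev.T ℝ (((0 : ℕ) : ℤ) + 1) = X := by
      norm_num [Chebyshev.T_one]
    rw [h0, h1, taylor_one, taylor_X, Polynomial.C_1]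
    refine ⟨?_, ?_, ?_, ?_, ?_⟩
    · intro k
      rw [Polynomial.coeff_one]
      split <;> norm_num
    · intro k
      rw [Polynomial.coeff_one, Polynomial.coeff_add, Polynomial.coeff_X, Polynomial.coeff_C]
      rcases k with _ | _ | k <;> norm_num
      linarith
    · rw [Polynomial.coeff_one]; norm_num
    · simp [Polynomial.coeff_one]
    · rw [Polynomial.coeff_one, Polynomial.coeff_add, Polynomial.coeff_X, Polynomial.coeff_C]
      norm_num
  | succ n ih =>
    obtain ⟨hpos, hmono, hone, hsq, hdelta⟩ := ih
    have hcast : ((n : ℤ) + 1 + 1) = (n : ℤ) + 2 := by ring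
    have hrec := my_taylor_rec r (n : ℤ)
    set S0 := taylor r (Chebyshev.T ℝ (n : ℤ)) with hS0
    set S1 := taylor r (Chebyshev.T ℝ ((n : ℤ) + 1)) with hS1
    have hS2 : taylor r (Chebyshev.T ℝ ((n : ℤ) + 1 + 1))
        = Polynomial.C 2 * (X + Polynomial.C r) * S1 - S0 := by
      rw [hcast, hrec]
    have hpos1 : ∀ k, 0 ≤ S1.coeff k := fun k => le_trans (hpos k) (hmono k)
    have hcoeff2 : ∀ k, (taylor r (Chebyshev.T ℝ ((n : ℤ) + 1 + 1))).coeff k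
        = 2 * (X * S1).coeff k + 2 * r * S1.coeff k - S0.coeff k := by
      intro k
      rw [hS2, Polynomial.coeff_sub, my_coeff_aux]
    have hXpos : ∀ k, 0 ≤ (X * S1).coeff k := my_coeff_X_mul_nonneg S1 hpos1
    have hmono2 : ∀ k, S1.coeff k ≤ (taylor r (Chebyshev.T ℝ ((n : ℤ) + 1 + 1))).coeff k := by
      intro k
      rw [hcoeff2 k]
      have h1 := hpos k
      have h2 := hmono k
      have h3 := hpos1 k
      have h4 := hXpos k
      nlinarith
    have hone1 : 1 ≤ S1.coeff 0 := le_trans hone (hmono 0)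
    refine ⟨hpos1, ?_, hone1, ?_, ?_⟩
    · push_cast; exact hmono2
    · push_cast
      have := hsq
      have := hdelta
      nlinarith
    · push_cast
      rw [hcoeff2 1, my_coeff_X_mul_one]
      have h5 := hpos1 1
      have h6 := hpos 1
      have h7 := hdelta
      nlinarith



lemma my_A_bound (ω₀ ω₁ : ℝ) (hω : 1 ≤ ω₀) (s : ℕ) (w : ℂ) (hw : ‖w‖ ≤ ω₁) :
    ‖(Chebyshev.T ℂ (s : ℤ)).eval ((ω₀ : ℂ) + w)‖ ≤ (Chebyshev.T ℝ (s : ℤ)).eval (ω₀ + ω₁) := by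
  set q := taylor ω₀ (Chebyshev.T ℝ (s : ℤ)) with hqdef
  have hq : ∀ k, 0 ≤ q.coeff k := (my_cheb_taylor ω₀ hω s).1
  set qC := taylor ((ω₀ : ℂ)) (Chebyshev.T ℂ (s : ℤ)) with hqCdef
  have hqC : qC = q.map (algebraMap ℝ ℂ) := by
    rw [hqCdef, hqdef, taylor_apply, taylor_apply, ← Chebyshev.map_T (algebraMap ℝ ℂ) (s : ℤ),
      Polynomial.map_comp]
    simp
  have hcoeff : ∀ k, qC.coeff k = ((q.coeff k : ℝ) : ℂ) := by
    intro k; rw [hqC, Polynomial.coeff_map]; rfl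
  have heval : (Chebyshev.T ℂ (s : ℤ)).eval ((ω₀ : ℂ) + w) = qC.eval w := by
    rw [hqCdef, taylor_eval, add_comm]
  have hdeg : qC.natDegree < q.natDegree + 1 := by
    rw [hqC]
    exact lt_of_le_of_lt (Polynomial.natDegree_map_le) (Nat.lt_succ_self _)
  rw [heval, Polynomial.eval_eq_sum_range' hdeg]
  have hbound : ∀ i, ‖qC.coeff i * w ^ i‖ ≤ q.coeff i * ω₁ ^ i := by
    intro i
    rw [norm_mul, norm_pow, hcoeff i, Complex.norm_real, Real.norm_eq_abs,
      abs_of_nonneg (hq i)]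
    exact mul_le_mul_of_nonneg_left (pow_le_pow_left₀ (norm_nonneg w) hw i) (hq i)
  calc ‖∑ i ∈ Finset.range (q.natDegree + 1), qC.coeff i * w ^ i‖
      ≤ ∑ i ∈ Finset.range (q.natDegree + 1), ‖qC.coeff i * w ^ i‖ := norm_sum_le _ _
    _ ≤ ∑ i ∈ Finset.range (q.natDegree + 1), q.coeff i * ω₁ ^ i :=
        Finset.sum_le_sum fun i _ => hbound i
    _ = q.eval ω₁ := (Polynomial.eval_eq_sum_range ω₁).symm
    _ = (Chebyshev.T ℝ (s : ℤ)).eval (ω₀ + ω₁) := by rw [hqdef, taylor_eval, add_comm]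


lemma my_cheb_taylor2 (r : ℝ) (hr : 1 ≤ r) (n : ℕ) :
    (∀ k, 0 ≤ (taylor r (Chebyshev.T ℝ (n : ℤ))).coeff k) ∧
    (1 ≤ (taylor r (Chebyshev.T ℝ (n : ℤ))).coeff 0) ∧
    ((n : ℝ) ^ 2 ≤ (taylor r (Chebyshev.T ℝ (n : ℤ))).coeff 1) := by
  obtain ⟨h1, _, h3, h4, _⟩ := my_cheb_taylor r hr n
  exact ⟨h1, h3, h4⟩


set_option maxHeartbeats 1000000 in
/-- Let `η > 0`, `s ≥ 1`, `ω₀ = 1 + η/s²`, `ω₁ = T_s(ω₀)/T_s'(ω₀)`,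
`A_s(z) = T_s(ω₀ + ω₁ z)/T_s(ω₀)` and `B_s(z) = (A_s(z) − 1)/z`. Then
`sup_{|z| ≤ 1, z ≠ 0} |B_s(z)| ≤ 1 + exp (η + exp η)`. -/
theorem B_function_bound_on_disc (η : ℝ) (hη : 0 < η) (s : ℕ) (hs : 1 ≤ s)
    (ω₀ ω₁ : ℝ) (hω₀ : ω₀ = 1 + η / (s : ℝ) ^ 2)
    (hω₁ : ω₁ = (Chebyshev.T ℝ (s : ℤ)).eval ω₀
      / ((Polynomial.derivative (Chebyshev.T ℝ (s : ℤ))).eval ω₀))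
    (A B : ℂ → ℂ)
    (hA : ∀ z : ℂ, A z = (Chebyshev.T ℂ (s : ℤ)).eval ((ω₀ : ℂ) + (ω₁ : ℂ) * z)
      / (Chebyshev.T ℂ (s : ℤ)).eval (ω₀ : ℂ))
    (hB : ∀ z : ℂ, B z = (A z - 1) / z) :
    ∀ z : ℂ, ‖z‖ ≤ 1 → z ≠ 0 →
      ‖B z‖ ≤ 1 + Real.exp (η + Real.exp η) := by
  intro z hz hz0
  have hs1 : (1 : ℝ) ≤ (s : ℝ) := by exact_mod_cast hs
  have hs2 : (0 : ℝ) < (s : ℝ) ^ 2 := by positivity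
  have hω0ge : 1 ≤ ω₀ := by
    rw [hω₀]
    have : 0 < η / (s : ℝ) ^ 2 := by positivity
    linarith
  obtain ⟨hqpos, hone, hsq⟩ := my_cheb_taylor2 ω₀ hω0ge s
  set t := (Chebyshev.T ℝ (s : ℤ)).eval ω₀ with ht
  set t' := (Polynomial.derivative (Chebyshev.T ℝ (s : ℤ))).eval ω₀ with ht'
  rw [taylor_coeff_zero] at hone
  rw [taylor_coeff_one] at hsq
  have ht1 : 1 ≤ t := hone
  have htpos : 0 < t := by linarith
  have ht'ge : (s : ℝ) ^ 2 ≤ t' := hsq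
  have ht'pos : 0 < t' := lt_of_lt_of_le hs2 ht'ge
  have hω₁pos : 0 < ω₁ := by rw [hω₁]; exact div_pos htpos ht'pos
  have hω₁le : ω₁ ≤ t / (s : ℝ) ^ 2 := by
    rw [hω₁]
    exact div_le_div_of_nonneg_left htpos.le hs2 ht'ge
  -- cosh parametrization
  obtain ⟨φ, hφ0, hφ⟩ := my_exists_cosh_eq hω0ge
  obtain ⟨ψ, hψ0, hψ⟩ := my_exists_cosh_eq (u := ω₀ + ω₁) (by linarith)
  have hcast : ((s : ℤ) : ℝ) = (s : ℝ) := by push_cast; ring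
  have htcosh : t = Real.cosh ((s : ℝ) * φ) := by
    rw [ht, ← hφ, my_T_cosh, hcast]
  have hT1 : (Chebyshev.T ℝ (s : ℤ)).eval (ω₀ + ω₁) = Real.cosh ((s : ℝ) * ψ) := by
    rw [← hψ, my_T_cosh, hcast]
  -- x² ≤ 2η
  have hφsq : (s : ℝ) ^ 2 * φ ^ 2 ≤ 2 * η := by
    have h1 := my_one_add_sq_le_cosh φ
    rw [hφ, hω₀] at h1
    have h2 : φ ^ 2 / 2 ≤ η / (s : ℝ) ^ 2 := by linarith
    have h3 : (s : ℝ) ^ 2 * (η / (s : ℝ) ^ 2) = η := by field_simp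
    nlinarith
  -- ψ² ≤ φ² + 2ω₁
  have hψφ : φ ≤ ψ := by
    have h1 : Real.cosh φ ≤ Real.cosh ψ := by rw [hφ, hψ]; linarith
    have h2 := Real.cosh_le_cosh.1 h1
    rwa [abs_of_nonneg hφ0, abs_of_nonneg hψ0] at h2
  have hψsq : ψ ^ 2 ≤ φ ^ 2 + 2 * ω₁ := by
    have h2 := my_cosh_sqrt (sq_nonneg φ) (by linarith : (0:ℝ) ≤ 2 * ω₁)
    rw [Real.sqrt_sq hφ0] at h2
    have h3 : Real.cosh ψ ≤ Real.cosh (Real.sqrt (φ ^ 2 + 2 * ω₁)) := by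
      rw [hψ, ← hφ]; linarith
    have h4 := Real.cosh_le_cosh.1 h3
    rw [abs_of_nonneg hψ0, abs_of_nonneg (Real.sqrt_nonneg _)] at h4
    have h5 : Real.sqrt (φ ^ 2 + 2 * ω₁) ^ 2 = φ ^ 2 + 2 * ω₁ :=
      Real.sq_sqrt (by positivity)
    nlinarith [Real.sqrt_nonneg (φ ^ 2 + 2 * ω₁)]
  -- key comparison
  have hkey : Real.cosh ((s : ℝ) * ψ) ≤
      Real.exp ((s : ℝ) ^ 2 * ω₁) * Real.cosh ((s : ℝ) * φ) := by
    apply my_cosh_compare (by positivity)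
    · have : (0:ℝ) ≤ (s:ℝ) := by linarith
      exact mul_le_mul_of_nonneg_left hψφ this
    · have h6 := mul_le_mul_of_nonneg_left hψsq hs2.le
      ring_nf
      ring_nf at h6
      linarith
  -- c ≤ exp η
  have hc : (s : ℝ) ^ 2 * ω₁ ≤ Real.exp η := by
    calc (s : ℝ) ^ 2 * ω₁ ≤ (s : ℝ) ^ 2 * (t / (s : ℝ) ^ 2) :=
          mul_le_mul_of_nonneg_left hω₁le hs2.le
      _ = t := by field_simp
      _ = Real.cosh ((s : ℝ) * φ) := htcosh
      _ ≤ Real.exp (((s : ℝ) * φ) ^ 2 / 2) := Real.cosh_le_exp_half_sq _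
      _ ≤ Real.exp η := Real.exp_le_exp.2 (by nlinarith)
  -- real bound
  have hreal : (Chebyshev.T ℝ (s : ℤ)).eval (ω₀ + ω₁) ≤ Real.exp (η + Real.exp η) * t := by
    rw [hT1, htcosh]
    calc Real.cosh ((s : ℝ) * ψ)
        ≤ Real.exp ((s : ℝ) ^ 2 * ω₁) * Real.cosh ((s : ℝ) * φ) := hkey
      _ ≤ Real.exp (η + Real.exp η) * Real.cosh ((s : ℝ) * φ) := by
          apply mul_le_mul_of_nonneg_right _ (Real.cosh_pos _).le
          exact Real.exp_le_exp.2 (by linarith)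
  -- complex side
  have htC : (Chebyshev.T ℂ (s : ℤ)).eval ((ω₀ : ℂ)) = (t : ℂ) := by
    rw [ht]; exact (complex_ofReal_eval_T ω₀ (s : ℤ)).symm
  set P := (Chebyshev.T ℂ (s : ℤ)).comp (Polynomial.C (ω₀ : ℂ) + Polynomial.C (ω₁ : ℂ) * X)
    with hP
  have hPeval : ∀ w : ℂ, P.eval w
      = (Chebyshev.T ℂ (s : ℤ)).eval ((ω₀ : ℂ) + (ω₁ : ℂ) * w) := by
    intro w; rw [hP, Polynomial.eval_comp]; simp
  have hP0 : P.eval 0 = (t : ℂ) := by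
    rw [hPeval 0, mul_zero, add_zero, htC]
  obtain ⟨Q, hQ⟩ : (X : ℂ[X]) ∣ (P - Polynomial.C (t : ℂ)) := by
    rw [Polynomial.X_dvd_iff, Polynomial.coeff_sub, Polynomial.coeff_zero_eq_eval_zero, hP0,
      Polynomial.coeff_C]
    simp
  have hPQ : ∀ w : ℂ, P.eval w - (t : ℂ) = w * Q.eval w := by
    intro w
    have h1 := congrArg (Polynomial.eval w) hQ
    simpa using h1
  have hAb : ∀ w : ℂ, ‖w‖ ≤ 1 → ‖P.eval w‖ ≤ Real.exp (η + Real.exp η) * t := by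
    intro w hw
    rw [hPeval w]
    calc ‖(Chebyshev.T ℂ (s : ℤ)).eval ((ω₀ : ℂ) + (ω₁ : ℂ) * w)‖
        ≤ (Chebyshev.T ℝ (s : ℤ)).eval (ω₀ + ω₁) := by
          apply my_A_bound ω₀ ω₁ hω0ge s
          rw [norm_mul, Complex.norm_real, Real.norm_eq_abs, abs_of_nonneg hω₁pos.le]
          nlinarith [norm_nonneg w]
      _ ≤ Real.exp (η + Real.exp η) * t := hreal
  set Cb := (1 + Real.exp (η + Real.exp η)) * t with hCb
  have hfront : ∀ w ∈ frontier (Metric.ball (0:ℂ) 1), ‖Q.eval w‖ ≤ Cb := by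
    intro w hw
    rw [frontier_ball (0:ℂ) one_ne_zero] at hw
    have hw1 : ‖w‖ = 1 := by simpa using hw
    have h2 : ‖w * Q.eval w‖ = ‖Q.eval w‖ := by rw [norm_mul, hw1, one_mul]
    rw [← h2, ← hPQ w]
    have h3 : ‖(t : ℂ)‖ = t := by
      rw [Complex.norm_real, Real.norm_eq_abs, abs_of_nonneg htpos.le]
    calc ‖P.eval w - (t : ℂ)‖ ≤ ‖P.eval w‖ + ‖(t : ℂ)‖ := norm_sub_le _ _
      _ ≤ Real.exp (η + Real.exp η) * t + t := by
          have := hAb w (le_of_eq hw1); linarith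
      _ = Cb := by rw [hCb]; ring
  have hin : ‖Q.eval z‖ ≤ Cb := by
    apply Complex.norm_le_of_forall_mem_frontier_norm_le Metric.isBounded_ball
      (Q.differentiable.diffContOnCl) hfront
    rw [closure_ball (0:ℂ) one_ne_zero]
    rw [Metric.mem_closedBall]
    simpa [Complex.dist_eq] using hz
  -- final computation
  have htC0 : (t : ℂ) ≠ 0 := by
    simp only [ne_eq, Complex.ofReal_eq_zero]
    exact ne_of_gt htpos
  have hBz : B z = Q.eval z / (t : ℂ) := by
    rw [hB z, hA z,
      show (Chebyshev.T ℂ (s : ℤ)).eval ((ω₀ : ℂ) + (ω₁ : ℂ) * z) = P.eval z from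
        (hPeval z).symm, htC]
    have h4 := hPQ z
    rw [div_sub_one htC0, h4, mul_div_assoc, mul_div_cancel_left₀ _ hz0]
  rw [hBz]
  rw [norm_div]
  have h5 : ‖(t : ℂ)‖ = t := by
    rw [Complex.norm_real, Real.norm_eq_abs, abs_of_nonneg htpos.le]
  rw [h5]
  rw [div_le_iff₀ htpos]
  calc ‖Q.eval z‖ ≤ Cb := hin
    _ = (1 + Real.exp (η + Real.exp η)) * t := rfl
end

section
/- Let η > 0, s ≥ 1, ω₀ = 1 + η/s², ω₁ = T_s(ω₀)/T_s'(ω₀), A_s(z) = T_s(ω₀ + ω₁ z)/T_s(ω₀), and let δ ∈ (0, η e^{-η}]. Then for all z ∈ [-2/ω₁, -δ], one has |A_s(z)| ≤ A_s(-δ) < 1. -/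
open Polynomial Polynomial.Chebyshev Set

namespace DampingAux
open Real

lemma T_real_cosh (n : ℤ) (t : ℝ) :
    (Chebyshev.T ℝ n).eval (Real.cosh t) = Real.cosh (n * t) := by
  have h := T_complex_cos (t * Complex.I) n
  rw [Complex.cos_mul_I] at h
  have h2 : (n : ℂ) * ((t : ℂ) * Complex.I) = ((n * t : ℝ) : ℂ) * Complex.I := by push_cast; ring
  rw [h2, Complex.cos_mul_I] at h
  exact_mod_cast h

lemma U_real_cosh (n : ℤ) (t : ℝ) :
    (Chebyshev.U ℝ n).eval (Real.cosh t) * Real.sinh t = Real.sinh ((n + 1) * t) := by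
  have h := U_complex_cos (t * Complex.I) n
  rw [Complex.sin_mul_I, Complex.cos_mul_I] at h
  have h2 : ((n : ℂ) + 1) * ((t : ℂ) * Complex.I) = (((n : ℂ) + 1) * t) * Complex.I := by ring
  rw [h2, Complex.sin_mul_I] at h
  have h3 : ((Chebyshev.U ℂ n).eval (Complex.cosh t) * Complex.sinh t) * Complex.I
      = Complex.sinh (((n : ℂ) + 1) * t) * Complex.I := by rw [mul_assoc]; exact h
  have h4 := mul_right_cancel₀ Complex.I_ne_zero h3
  exact_mod_cast h4

lemma nonneg_of_deriv {f f' : ℝ → ℝ} (hd : ∀ x, HasDerivAt f (f' x) x)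
    (h0 : f 0 = 0) (h' : ∀ x, 0 ≤ x → 0 ≤ f' x) {x : ℝ} (hx : 0 ≤ x) : 0 ≤ f x := by
  have hmono : MonotoneOn f (Set.Ici 0) := by
    apply monotoneOn_of_deriv_nonneg (convex_Ici 0)
    · exact (Differentiable.continuous fun y => (hd y).differentiableAt).continuousOn
    · exact fun y _ => ((hd y).differentiableAt).differentiableWithinAt
    · intro y hy
      rw [interior_Ici] at hy
      rw [(hd y).deriv]
      exact h' y hy.le
  have := hmono (Set.self_mem_Ici) hx hx
  rwa [h0] at this

lemma sinh_le_mul_cosh {x : ℝ} (hx : 0 ≤ x) : Real.sinh x ≤ x * Real.cosh x := by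
  have h2 : 0 ≤ x * Real.cosh x - Real.sinh x :=
    nonneg_of_deriv (f := fun x => x * Real.cosh x - Real.sinh x)
      (f' := fun x => x * Real.sinh x)
      (fun y => by
        have h := ((hasDerivAt_id y).mul (Real.hasDerivAt_cosh y)).sub (Real.hasDerivAt_sinh y)
        convert h using 1 <;> first | rfl | (simp [id_eq] <;> ring))
      (by simp)
      (fun y hy => mul_nonneg hy (Real.sinh_nonneg_iff.2 hy)) hx
  linarith

lemma mul_cosh_le {x : ℝ} (hx : 0 ≤ x) :
    x * Real.cosh x ≤ (1 + x ^ 2 / 3) * Real.sinh x := by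
  have h2 : 0 ≤ (1 + x ^ 2 / 3) * Real.sinh x - x * Real.cosh x :=
    nonneg_of_deriv (f := fun x => (1 + x ^ 2 / 3) * Real.sinh x - x * Real.cosh x)
      (f' := fun x => x / 3 * (x * Real.cosh x - Real.sinh x))
      (fun y => by
        have h := (((hasDerivAt_id y).pow 2).div_const 3 |>.const_add 1 |>.mul
          (Real.hasDerivAt_sinh y)).sub ((hasDerivAt_id y).mul (Real.hasDerivAt_cosh y))
        convert h using 1 <;> first | rfl | (simp [id_eq] <;> ring))
      (by simp)
      (fun y hy => mul_nonneg (by positivity) (by linarith [sinh_le_mul_cosh hy])) hx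
  linarith

lemma quad_le_cosh {x : ℝ} (hx : 0 ≤ x) : 1 + x ^ 2 / 2 ≤ Real.cosh x := by
  have h2 : 0 ≤ Real.cosh x - (1 + x ^ 2 / 2) :=
    nonneg_of_deriv (f := fun x => Real.cosh x - (1 + x ^ 2 / 2))
      (f' := fun x => Real.sinh x - x)
      (fun y => by
        have h := (Real.hasDerivAt_cosh y).sub
          (((hasDerivAt_id y).pow 2).div_const 2 |>.const_add 1)
        convert h using 1 <;> first | rfl | (simp [id_eq] <;> ring))
      (by simp)
      (fun y hy => by
        have := Real.self_le_sinh_iff.2 hy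
        linarith) hx
  linarith

/-- the canonical hyperbolic angle for `1 ≤ x` -/
noncomputable def ang (x : ℝ) : ℝ := Real.arsinh (Real.sqrt (x ^ 2 - 1))

lemma ang_nonneg (x : ℝ) : 0 ≤ ang x := Real.arsinh_nonneg_iff.2 (Real.sqrt_nonneg _)

lemma cosh_ang {x : ℝ} (hx : 1 ≤ x) : Real.cosh (ang x) = x := by
  rw [ang, Real.cosh_arsinh, Real.sq_sqrt (by nlinarith), ← Real.sqrt_sq (by linarith : (0:ℝ) ≤ x)]
  norm_num

lemma ang_lt_ang {x y : ℝ} (hx : 1 ≤ x) (hxy : x < y) : ang x < ang y := by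
  apply Real.arsinh_lt_arsinh.2
  apply Real.sqrt_lt_sqrt (by nlinarith)
  nlinarith

lemma T_strict_mono {s : ℕ} (hs : 1 ≤ s) {x y : ℝ} (hx : 1 ≤ x) (hxy : x < y) :
    (Chebyshev.T ℝ (s : ℤ)).eval x < (Chebyshev.T ℝ (s : ℤ)).eval y := by
  have hax := cosh_ang hx
  have hay := cosh_ang (le_of_lt (lt_of_le_of_lt hx hxy))
  rw [← hax, ← hay, T_real_cosh, T_real_cosh]
  have h1 : 0 ≤ ang x := ang_nonneg x
  have h2 : ang x < ang y := ang_lt_ang hx hxy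
  have hs' : (0:ℝ) < ((s : ℤ) : ℝ) := by exact_mod_cast hs
  apply Real.cosh_lt_cosh.2
  rw [abs_of_nonneg (mul_nonneg hs'.le h1), abs_of_nonneg (mul_nonneg hs'.le (ang_nonneg y))]
  exact (mul_lt_mul_iff_right₀ hs').2 h2

lemma T_mono {s : ℕ} {x y : ℝ} (hx : 1 ≤ x) (hxy : x ≤ y) :
    (Chebyshev.T ℝ (s : ℤ)).eval x ≤ (Chebyshev.T ℝ (s : ℤ)).eval y := by
  have hax := cosh_ang hx
  have hay := cosh_ang (hx.trans hxy)
  rw [← hax, ← hay, T_real_cosh, T_real_cosh]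
  have h1 : 0 ≤ ang x := ang_nonneg x
  have h2 : ang x ≤ ang y := by
    rcases eq_or_lt_of_le hxy with h | h
    · rw [h]
    · exact (ang_lt_ang hx h).le
  apply Real.cosh_le_cosh.2
  have hs' : (0:ℝ) ≤ ((s:ℤ) : ℝ) := by positivity
  rw [abs_of_nonneg (mul_nonneg hs' h1), abs_of_nonneg (mul_nonneg hs' (ang_nonneg y))]
  exact mul_le_mul_of_nonneg_left h2 hs'

lemma one_le_T {s : ℕ} {x : ℝ} (hx : 1 ≤ x) : 1 ≤ (Chebyshev.T ℝ (s : ℤ)).eval x := by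
  rw [← cosh_ang hx, T_real_cosh]
  exact Real.one_le_cosh _

lemma abs_T_le_one {s : ℕ} {x : ℝ} (h1 : -1 ≤ x) (h2 : x ≤ 1) :
    |(Chebyshev.T ℝ (s : ℤ)).eval x| ≤ 1 := by
  rw [← Real.cos_arccos h1 h2, T_real_cos]
  exact Real.abs_cos_le_one _

end DampingAux

open DampingAux in
/-- Let `η > 0`, `s ≥ 1`, `ω₀ = 1 + η/s²`, `ω₁ = T_s(ω₀)/T_s'(ω₀)`,
`A_s(z) = T_s(ω₀ + ω₁ z)/T_s(ω₀)`, and `δ ∈ (0, η e^{-η}]`. Then for all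
`z ∈ [-2/ω₁, -δ]`, `|A_s(z)| ≤ A_s(-δ) < 1`. -/
theorem damping_bound (η : ℝ) (hη : 0 < η) (s : ℕ) (hs : 1 ≤ s)
    (ω₀ ω₁ : ℝ) (hω₀ : ω₀ = 1 + η / (s : ℝ) ^ 2)
    (hω₁ : ω₁ = (Chebyshev.T ℝ (s : ℤ)).eval ω₀
      / ((Polynomial.derivative (Chebyshev.T ℝ (s : ℤ))).eval ω₀))
    (A : ℝ → ℝ)
    (hA : ∀ z : ℝ, A z = (Chebyshev.T ℝ (s : ℤ)).eval (ω₀ + ω₁ * z)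
      / (Chebyshev.T ℝ (s : ℤ)).eval ω₀)
    (δ : ℝ) (hδ : δ ∈ Set.Ioc 0 (η * Real.exp (-η))) :
    ∀ z ∈ Set.Icc (-(2 / ω₁)) (-δ), |A z| ≤ A (-δ) ∧ A (-δ) < 1 := by
  have hN0 : (0:ℝ) < (s:ℝ) := by exact_mod_cast hs
  have hN1 : (1:ℝ) ≤ (s:ℝ) := by exact_mod_cast hs
  have hN2 : (0:ℝ) < (s:ℝ)^2 := by positivity
  have hω₀gt : 1 < ω₀ := by
    have : 0 < η / (s:ℝ)^2 := by positivity
    rw [hω₀]; linarith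
  set t := ang ω₀ with htdef
  have ht : Real.cosh t = ω₀ := cosh_ang hω₀gt.le
  have ht0 : 0 < t := by
    refine lt_of_le_of_ne (htdef ▸ ang_nonneg ω₀) fun h => ?_
    rw [← h, Real.cosh_zero] at ht
    linarith
  have hsinht : 0 < Real.sinh t := Real.sinh_pos_iff.2 ht0
  set u := (s:ℝ) * t with hudef
  have hu0 : 0 < u := mul_pos hN0 ht0
  have hsinhu : 0 < Real.sinh u := Real.sinh_pos_iff.2 hu0
  have hcoshu : 0 < Real.cosh u := Real.cosh_pos u
  -- evaluations
  have hTval : (Chebyshev.T ℝ (s:ℤ)).eval ω₀ = Real.cosh u := by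
    rw [← ht, DampingAux.T_real_cosh]; push_cast; rfl
  have hT'val : (Polynomial.derivative (Chebyshev.T ℝ (s:ℤ))).eval ω₀
      = (s:ℝ) * Real.sinh u / Real.sinh t := by
    rw [T_derivative_eq_U]
    have hU := U_real_cosh ((s:ℤ) - 1) t
    rw [ht] at hU
    have : (((s:ℤ) - 1 : ℤ) : ℝ) + 1 = (s:ℝ) := by push_cast; ring
    rw [this] at hU
    rw [eq_div_iff hsinht.ne', eval_mul, mul_assoc, hU, Polynomial.eval_intCast, hudef]
    push_cast
    ring
  have hω₁val : ω₁ = Real.cosh u * Real.sinh t / ((s:ℝ) * Real.sinh u) := by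
    rw [hω₁, hTval, hT'val, div_div_eq_mul_div]
  have hω₁pos : 0 < ω₁ := by
    rw [hω₁val]; exact div_pos (mul_pos hcoshu hsinht) (mul_pos hN0 hsinhu)
  -- key bound ω₁ s² ≤ exp η
  have hkey : ω₁ * (s:ℝ)^2 ≤ Real.exp η := by
    have ht2 : t ^ 2 / 2 ≤ η / (s:ℝ)^2 := by
      have := quad_le_cosh ht0.le
      rw [ht, hω₀] at this
      linarith
    have hu2 : u ^ 2 ≤ 2 * η := by
      have h' : (s:ℝ)^2 * (t^2/2) ≤ (s:ℝ)^2 * (η/(s:ℝ)^2) := mul_le_mul_of_nonneg_left ht2 hN2.le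
      have h'' : (s:ℝ)^2 * (η/(s:ℝ)^2) = η := by field_simp
      rw [hudef, mul_pow]
      nlinarith
    by_cases hs1 : s = 1
    · subst hs1
      have : ω₁ = ω₀ := by
        rw [hω₁]
        norm_num [Chebyshev.T_one]
      rw [this, hω₀]
      norm_num
      linarith [Real.add_one_le_exp η]
    · have hs2 : 2 ≤ s := by omega
      have hN4 : (4:ℝ) ≤ (s:ℝ)^2 := by
        have : (2:ℝ) ≤ (s:ℝ) := by exact_mod_cast hs2
        nlinarith
      have e1 : u * Real.cosh u ≤ (1 + u ^ 2 / 3) * Real.sinh u := mul_cosh_le hu0.le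
      have e2 : Real.sinh t ≤ t * ω₀ := by
        have := sinh_le_mul_cosh ht0.le
        rwa [ht] at this
      have hω₀exp : ω₀ ≤ Real.exp (η/4) := by
        have h1 : ω₀ ≤ 1 + η/4 := by
          rw [hω₀]
          have : η / (s:ℝ)^2 ≤ η/4 := by
            apply div_le_div_of_nonneg_left hη.le (by norm_num) hN4
          linarith
        linarith [Real.add_one_le_exp (η/4)]
      have hu3 : 1 + u^2/3 ≤ Real.exp (2*η/3) := by
        have h1 : 1 + u^2/3 ≤ 1 + 2*η/3 := by linarith
        linarith [Real.add_one_le_exp (2*η/3)]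
      have hprod : ω₀ * (1 + u^2/3) ≤ Real.exp η := by
        have h1 : ω₀ * (1 + u^2/3) ≤ Real.exp (η/4) * Real.exp (2*η/3) := by
          apply mul_le_mul hω₀exp hu3 (by positivity) (Real.exp_pos _).le
        rw [← Real.exp_add] at h1
        apply h1.trans
        apply Real.exp_le_exp.2
        linarith
      -- N² cosh u sinh t ≤ exp η * (N sinh u)
      have key2 : Real.cosh u * Real.sinh t * (s:ℝ)^2 ≤ Real.exp η * ((s:ℝ) * Real.sinh u) := by
        have i1 : (s:ℝ) * (u * Real.cosh u) ≤ (s:ℝ) * ((1 + u^2/3) * Real.sinh u) :=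
          mul_le_mul_of_nonneg_left e1 hN0.le
        have i2 : Real.cosh u * Real.sinh t * (s:ℝ)^2 ≤ Real.cosh u * (t * ω₀) * (s:ℝ)^2 := by
          apply mul_le_mul_of_nonneg_right _ hN2.le
          exact mul_le_mul_of_nonneg_left e2 hcoshu.le
        have i3 : Real.cosh u * (t * ω₀) * (s:ℝ)^2 = ω₀ * ((s:ℝ) * (u * Real.cosh u)) := by
          rw [hudef]; ring
        have i4 : ω₀ * ((s:ℝ) * (u * Real.cosh u)) ≤ ω₀ * ((s:ℝ) * ((1 + u^2/3) * Real.sinh u)) :=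
          mul_le_mul_of_nonneg_left i1 (by linarith)
        have i5 : ω₀ * ((s:ℝ) * ((1 + u^2/3) * Real.sinh u))
            = (ω₀ * (1 + u^2/3)) * ((s:ℝ) * Real.sinh u) := by ring
        have i6 : (ω₀ * (1 + u^2/3)) * ((s:ℝ) * Real.sinh u)
            ≤ Real.exp η * ((s:ℝ) * Real.sinh u) :=
          mul_le_mul_of_nonneg_right hprod (by positivity)
        linarith [i2, i3 ▸ i4, i5 ▸ i6]
      rw [hω₁val, div_mul_eq_mul_div, div_le_iff₀ (mul_pos hN0 hsinhu)]
      exact key2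
  -- δ ω₁ ≤ η / s²
  have hδω : ω₁ * δ ≤ η / (s:ℝ)^2 := by
    have h1 : ω₁ ≤ Real.exp η / (s:ℝ)^2 := by
      rw [le_div_iff₀ hN2]; exact hkey
    have h2 : ω₁ * δ ≤ (Real.exp η / (s:ℝ)^2) * (η * Real.exp (-η)) :=
      mul_le_mul h1 hδ.2 hδ.1.le (by positivity)
    apply h2.trans_eq
    rw [Real.exp_neg]
    field_simp
  set d := ω₀ - ω₁ * δ with hddef
  have hd1 : 1 ≤ d := by rw [hddef, hω₀]; linarith
  have hd2 : d < ω₀ := by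
    have := mul_pos hω₁pos hδ.1
    rw [hddef]; linarith
  have hTω1 : 1 ≤ (Chebyshev.T ℝ (s:ℤ)).eval ω₀ := one_le_T hω₀gt.le
  have hTωpos : 0 < (Chebyshev.T ℝ (s:ℤ)).eval ω₀ := by linarith
  have hTd1 : 1 ≤ (Chebyshev.T ℝ (s:ℤ)).eval d := one_le_T hd1
  have hTdTω : (Chebyshev.T ℝ (s:ℤ)).eval d < (Chebyshev.T ℝ (s:ℤ)).eval ω₀ :=
    T_strict_mono hs hd1 hd2
  have hAδ : A (-δ) = (Chebyshev.T ℝ (s:ℤ)).eval d / (Chebyshev.T ℝ (s:ℤ)).eval ω₀ := by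
    rw [hA, show ω₀ + ω₁ * (-δ) = ω₀ - ω₁ * δ by ring]
  have hAδlt : A (-δ) < 1 := by
    rw [hAδ]
    exact (div_lt_one hTωpos).2 hTdTω
  intro z hz
  refine ⟨?_, hAδlt⟩
  have hx1 : ω₀ + ω₁ * z ≤ d := by
    have : ω₁ * z ≤ ω₁ * (-δ) := mul_le_mul_of_nonneg_left hz.2 hω₁pos.le
    rw [hddef]; linarith
  have hx2 : -1 < ω₀ + ω₁ * z := by
    have h1 : ω₁ * (-(2/ω₁)) ≤ ω₁ * z := mul_le_mul_of_nonneg_left hz.1 hω₁pos.le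
    have h2 : ω₁ * (-(2/ω₁)) = -2 := by field_simp
    linarith
  have habs : |(Chebyshev.T ℝ (s:ℤ)).eval (ω₀ + ω₁ * z)| ≤ (Chebyshev.T ℝ (s:ℤ)).eval d := by
    by_cases hc : 1 ≤ ω₀ + ω₁ * z
    · rw [abs_of_nonneg (by linarith [one_le_T (s := s) hc])]
      exact T_mono hc hx1
    · push_neg at hc
      exact le_trans (abs_T_le_one hx2.le hc.le) hTd1
  rw [hA z, hAδ, abs_div, abs_of_pos hTωpos]
  exact div_le_div_of_nonneg_right habs hTωpos.le
end

section
/- Suppose γ ∈ (0, δ) satisfies γ/8 + C₀ γ e^{γ/2} < 1/2, where C₀ = sup_{s ≥ 1, |z| ≤ δ} |(A_s(z) − e^z)/z²|. Then for every s ≥ 1 and z ∈ [-γ, 0], one has |A_s(z)| ≤ e^{z/2}. -/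
open Set

/-- Suppose `γ ∈ (0, δ)` satisfies `γ/8 + C₀ γ e^{γ/2} < 1/2`, where `C₀` bounds
`|(A_s(z) − e^z)/z²|` on the disc of radius `δ`. Then for every `s ≥ 1` and `z ∈ [-γ, 0]`,
`|A_s(z)| ≤ e^{z/2}`. -/
theorem A_bounded_by_half_exp (A : ℕ → ℂ → ℂ) (δ : ℝ) (hδ : 0 < δ)
    (hanal : ∀ s, 1 ≤ s → DifferentiableOn ℂ (A s) (Metric.closedBall (0 : ℂ) δ))
    (hA0 : ∀ s, 1 ≤ s → A s 0 = 1)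
    (hA0' : ∀ s, 1 ≤ s → deriv (A s) 0 = 1)
    (C₀ : ℝ)
    (hC₀ : ∀ s, 1 ≤ s → ∀ z : ℂ, z ≠ 0 → ‖z‖ ≤ δ →
      ‖(A s z - Complex.exp z) / z ^ 2‖ ≤ C₀)
    (γ : ℝ) (hγ : γ ∈ Set.Ioo 0 δ)
    (hsmall : γ / 8 + C₀ * γ * Real.exp (γ / 2) < 1 / 2) :
    ∀ s, 1 ≤ s → ∀ x : ℝ, x ∈ Set.Icc (-γ) 0 →
      ‖A s (x : ℂ)‖ ≤ Real.exp (x / 2) := by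
  have hC0 : 0 ≤ C₀ := by
    have hne : (δ : ℂ) ≠ 0 := by exact_mod_cast hδ.ne'
    have hle : ‖(δ : ℂ)‖ ≤ δ := by
      rw [Complex.norm_real, Real.norm_eq_abs, abs_of_pos hδ]
    exact le_trans (norm_nonneg _) (hC₀ 1 le_rfl _ hne hle)
  intro s hs x hx
  obtain ⟨hx1, hx2⟩ := hx
  rcases eq_or_lt_of_le hx2 with h0 | hneg
  · rw [h0]
    simp [hA0 s hs]
  · set t : ℝ := -x with htdef
    have ht : 0 < t := by simp [htdef]; linarith
    have htγ : t ≤ γ := by simp [htdef]; linarith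
    have habs : ‖((x : ℂ))‖ = t := by
      rw [Complex.norm_real, Real.norm_eq_abs, abs_of_neg hneg]
    have hzne : (x : ℂ) ≠ 0 := by
      exact_mod_cast hneg.ne
    have hle : ‖((x : ℂ))‖ ≤ δ := by
      rw [habs]; exact le_trans htγ hγ.2.le
    have h1 := hC₀ s hs (x : ℂ) hzne hle
    have habs2 : ‖((x : ℂ) ^ 2)‖ = t ^ 2 := by
      rw [norm_pow, habs]
    have h2 : ‖(A s (x : ℂ) - Complex.exp (x : ℂ))‖ ≤ C₀ * t ^ 2 := by
      rw [norm_div, habs2, div_le_iff₀ (by positivity)] at h1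
      linarith
    have h3 : ‖(A s (x : ℂ))‖ ≤ Real.exp x + C₀ * t ^ 2 := by
      have : A s (x : ℂ) = Complex.exp (x : ℂ) + (A s (x : ℂ) - Complex.exp (x : ℂ)) := by
        ring
      rw [this]
      refine le_trans (norm_add_le _ _) ?_
      have : ‖(Complex.exp (x : ℂ))‖ = Real.exp x := by
        rw [Complex.norm_exp, Complex.ofReal_re]
      rw [this]
      linarith
    refine le_trans h3 ?_
    set a : ℝ := Real.exp (x / 2) with hadef
    have ha : 0 < a := Real.exp_pos _
    have hax : Real.exp x = a * a := by
      rw [hadef, ← Real.exp_add]; ring_nf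
    have haE1 : a * Real.exp (t / 2) = 1 := by
      rw [hadef, ← Real.exp_add, htdef]
      ring_nf
      exact Real.exp_zero
    have hquad : 1 + t / 2 + (t / 2) ^ 2 / 2 ≤ Real.exp (t / 2) :=
      Real.quadratic_le_exp_of_nonneg (by positivity)
    have haE : a * (1 + t / 2 + t ^ 2 / 8) ≤ 1 := by
      have := mul_le_mul_of_nonneg_left hquad ha.le
      nlinarith
    have hct : C₀ * t ≤ (1 / 2 - t / 8) * a := by
      have hmono : Real.exp (t / 2) ≤ Real.exp (γ / 2) :=
        Real.exp_le_exp.mpr (by linarith)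
      have h4 : C₀ * t * Real.exp (t / 2) ≤ C₀ * γ * Real.exp (γ / 2) := by
        have h5 : C₀ * t ≤ C₀ * γ := mul_le_mul_of_nonneg_left htγ hC0
        have h6 : 0 ≤ C₀ * t := mul_nonneg hC0 ht.le
        exact mul_le_mul h5 hmono (Real.exp_pos _).le (mul_nonneg hC0 hγ.1.le)
      have h7 : C₀ * t * Real.exp (t / 2) ≤ 1 / 2 - t / 8 := by linarith
      have := mul_le_mul_of_nonneg_right h7 ha.le
      calc C₀ * t = C₀ * t * (Real.exp (t / 2) * a) := by
            rw [mul_comm (Real.exp (t/2)) a, haE1, mul_one]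
        _ = C₀ * t * Real.exp (t / 2) * a := by ring
        _ ≤ (1 / 2 - t / 8) * a := this
    have hpos : (0:ℝ) < 1 + t / 2 + t ^ 2 / 8 := by positivity
    have key : a + t / 2 - t ^ 2 / 8 ≤ 1 := by
      nlinarith [haE, hpos, sq_nonneg (t * t), mul_pos ht ht]
    rw [hax]
    have p1 : C₀ * t * t ≤ (1 / 2 - t / 8) * a * t :=
      mul_le_mul_of_nonneg_right hct ht.le
    have p2 : a * (a + t / 2 - t ^ 2 / 8) ≤ a * 1 :=
      mul_le_mul_of_nonneg_left key ha.le
    have e1 : C₀ * t * t = C₀ * t ^ 2 := by ring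
    have e2 : a * (a + t / 2 - t ^ 2 / 8) = a * a + (1 / 2 - t / 8) * a * t := by ring
    rw [e1] at p1
    rw [e2, mul_one] at p2
    clear_value t a
    linarith [p1, p2]
end

section
/- Let η ∈ (0, η₀), s ≥ 1, ω₀ = 1 + η/s², ω₁ = T_s(ω₀)/T_s'(ω₀), A_s(z) = T_s(ω₀ + ω₁ z)/T_s(ω₀), and let δ ∈ (0, η e^{-η}). Then for all z ∈ [-δ, 0], (A_s(z) − 1)/z ≥ (1 − A_s(-δ))/δ > 0, and consequently min(1, |z|)/(1 − A_s(z)²) ≤ δ/(1 − A_s(-δ)). -/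
open Polynomial Polynomial.Chebyshev Set

lemma chebU_facts (x : ℝ) (hx : 1 ≤ x) : ∀ n : ℕ,
    ((n : ℝ) + 1 ≤ (U ℝ n).eval x ∧ (U ℝ n).eval x + 1 ≤ (U ℝ ((n : ℤ) + 1)).eval x) ∧
    (0 ≤ ((derivative (U ℝ n)).eval x) ∧
      (derivative (U ℝ n)).eval x ≤ (derivative (U ℝ ((n : ℤ) + 1))).eval x) := by
  intro n
  induction n with
  | zero =>
    refine ⟨⟨?_, ?_⟩, ?_, ?_⟩ <;>
      norm_num [U_zero, U_one, derivative_mul, derivative_X] <;> linarith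
  | succ n ih =>
    obtain ⟨⟨h1, h2⟩, h3, h4⟩ := ih
    have hrec : U ℝ ((n : ℤ) + 2) = 2 * X * U ℝ ((n : ℤ) + 1) - U ℝ (n : ℤ) :=
      U_add_two ℝ n
    have hcast : (((n + 1 : ℕ) : ℤ)) = (n : ℤ) + 1 := by push_cast; ring
    have hcast2 : ((n : ℤ) + 1) + 1 = (n : ℤ) + 2 := by ring
    have hU1nonneg : (0:ℝ) ≤ (U ℝ ((n : ℤ) + 1)).eval x := by nlinarith
    rw [hcast, hcast2, hrec]
    push_cast
    simp only [derivative_sub, derivative_mul, derivative_X, derivative_ofNat, eval_sub,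
      eval_add, eval_mul, eval_ofNat, eval_X, eval_zero, eval_one, zero_mul, mul_one,
      zero_add, add_zero]
    refine ⟨⟨by nlinarith, by nlinarith⟩, by nlinarith, by nlinarith⟩

lemma chebU_eval_one : ∀ n : ℕ, (U ℝ n).eval 1 = (n : ℝ) + 1 ∧
    (U ℝ ((n : ℤ) + 1)).eval 1 = (n : ℝ) + 2 := by
  intro n
  induction n with
  | zero => norm_num [U_zero, U_one]
  | succ n ih =>
    obtain ⟨h1, h2⟩ := ih
    have hrec : U ℝ ((n : ℤ) + 2) = 2 * X * U ℝ ((n : ℤ) + 1) - U ℝ (n : ℤ) :=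
      U_add_two ℝ n
    have hcast : (((n + 1 : ℕ) : ℤ)) = (n : ℤ) + 1 := by push_cast; ring
    have hcast2 : ((n : ℤ) + 1) + 1 = (n : ℤ) + 2 := by ring
    rw [hcast, hcast2, hrec]
    push_cast
    simp only [eval_sub, eval_mul, eval_ofNat, eval_X, h1, h2]
    constructor <;> ring

lemma chebT_eval_one : ∀ n : ℕ, (T ℝ n).eval 1 = 1 ∧ (T ℝ ((n : ℤ) + 1)).eval 1 = 1 := by
  intro n
  induction n with
  | zero => norm_num [T_zero, T_one]
  | succ n ih =>
    obtain ⟨h1, h2⟩ := ih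
    have hrec : T ℝ ((n : ℤ) + 2) = 2 * X * T ℝ ((n : ℤ) + 1) - T ℝ (n : ℤ) :=
      T_add_two ℝ n
    have hcast : (((n + 1 : ℕ) : ℤ)) = (n : ℤ) + 1 := by push_cast; ring
    have hcast2 : ((n : ℤ) + 1) + 1 = (n : ℤ) + 2 := by ring
    rw [hcast, hcast2, hrec]
    simp only [eval_sub, eval_mul, eval_ofNat, eval_X, h1, h2]
    norm_num
section Facts
variable (s : ℕ) (hs : 1 ≤ s)

include hs in
lemma chebT_deriv_eval (x : ℝ) :
    (derivative (T ℝ (s : ℤ))).eval x = (s : ℝ) * (U ℝ ((s - 1 : ℕ) : ℤ)).eval x := by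
  have hm : ((s - 1 : ℕ) : ℤ) = (s : ℤ) - 1 := by omega
  rw [T_derivative_eq_U, hm]
  simp

include hs in
lemma chebT_deriv2_eval (x : ℝ) :
    (derivative (derivative (T ℝ (s : ℤ)))).eval x
      = (s : ℝ) * (derivative (U ℝ ((s - 1 : ℕ) : ℤ))).eval x := by
  have hm : ((s - 1 : ℕ) : ℤ) = (s : ℤ) - 1 := by omega
  rw [T_derivative_eq_U, hm]
  rw [derivative_mul]
  simp

include hs in
lemma chebT_deriv_ge (x : ℝ) (hx : 1 ≤ x) :
    (s : ℝ) ^ 2 ≤ (derivative (T ℝ (s : ℤ))).eval x := by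
  rw [chebT_deriv_eval s hs]
  have h := (chebU_facts x hx (s - 1)).1.1
  have hcast : ((s - 1 : ℕ) : ℝ) + 1 = (s : ℝ) := by
    have : ((s - 1 : ℕ) : ℝ) = (s : ℝ) - 1 := by
      have : (1:ℕ) ≤ s := hs
      push_cast [Nat.cast_sub this]
      ring
    rw [this]; ring
  rw [hcast] at h
  have hspos : (0:ℝ) < s := by exact_mod_cast hs
  nlinarith

include hs in
lemma chebT_deriv2_nonneg (x : ℝ) (hx : 1 ≤ x) :
    0 ≤ (derivative (derivative (T ℝ (s : ℤ)))).eval x := by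
  rw [chebT_deriv2_eval s hs]
  have h := (chebU_facts x hx (s - 1)).2.1
  positivity

lemma chebT_eval_one' : (T ℝ (s : ℤ)).eval 1 = 1 := (chebT_eval_one s).1

include hs in
lemma chebT_deriv_eval_one : (derivative (T ℝ (s : ℤ))).eval 1 = (s : ℝ) ^ 2 := by
  rw [chebT_deriv_eval s hs]
  have h := (chebU_eval_one (s - 1)).1
  rw [h]
  have : ((s - 1 : ℕ) : ℝ) + 1 = (s : ℝ) := by
    have h1 : (1:ℕ) ≤ s := hs
    push_cast [Nat.cast_sub h1]; ring
  rw [this]; ring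

include hs in
lemma chebT_strictMono : StrictMonoOn (fun x : ℝ => (T ℝ (s : ℤ)).eval x) (Ici 1) := by
  apply strictMonoOn_of_deriv_pos (convex_Ici 1) (Polynomial.continuous _).continuousOn
  intro x hx
  rw [interior_Ici] at hx
  rw [Polynomial.deriv]
  have := chebT_deriv_ge s hs x hx.le
  have hspos : (0:ℝ) < s := by exact_mod_cast hs
  nlinarith

include hs in
lemma chebT_ge_one (x : ℝ) (hx : 1 ≤ x) : 1 ≤ (T ℝ (s : ℤ)).eval x := by
  have := (chebT_strictMono s hs).monotoneOn (self_mem_Ici) hx hx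
  rwa [chebT_eval_one' s] at this

include hs in
lemma chebT_convex : ConvexOn ℝ (Ici 1) (fun x : ℝ => (T ℝ (s : ℤ)).eval x) := by
  have hd1 : deriv (fun x : ℝ => (T ℝ (s : ℤ)).eval x)
      = fun x => (derivative (T ℝ (s : ℤ))).eval x := funext fun _ => Polynomial.deriv _
  apply convexOn_of_deriv2_nonneg (convex_Ici 1) (Polynomial.continuous _).continuousOn
      (Polynomial.differentiable _).differentiableOn
  · rw [hd1]; exact (Polynomial.differentiable _).differentiableOn
  · intro x hx
    rw [interior_Ici] at hx
    have h2 : deriv^[2] (fun x : ℝ => (T ℝ (s : ℤ)).eval x) x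
        = (derivative (derivative (T ℝ (s : ℤ)))).eval x := by
      simp only [Function.iterate_succ, Function.iterate_zero, Function.comp_apply, id_eq,
        Function.id_comp]
      rw [hd1]
      exact Polynomial.deriv _
    rw [h2]
    exact chebT_deriv2_nonneg s hs x hx.le

include hs in
lemma chebT_key (x : ℝ) (hx : 1 ≤ x) :
    (s : ℝ) ^ 2 * (T ℝ (s : ℤ)).eval x
      ≤ (1 + (s : ℝ) ^ 2 * (x - 1)) * (derivative (T ℝ (s : ℤ))).eval x := by
  set g : ℝ → ℝ := fun y =>
    (1 + (s : ℝ) ^ 2 * (y - 1)) * (derivative (T ℝ (s : ℤ))).eval y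
      - (s : ℝ) ^ 2 * (T ℝ (s : ℤ)).eval y with hg
  have hmono : MonotoneOn g (Ici 1) := by
    apply monotoneOn_of_hasDerivWithinAt_nonneg (f' := fun y =>
        (1 + (s : ℝ) ^ 2 * (y - 1)) * (derivative (derivative (T ℝ (s : ℤ)))).eval y)
      (convex_Ici 1)
    · apply ContinuousOn.sub
      · exact ((continuous_const.add (continuous_const.mul
          (continuous_id.sub continuous_const))).mul (Polynomial.continuous _)).continuousOn
      · exact (continuous_const.mul (Polynomial.continuous _)).continuousOn
    · intro y hy
      have h1 : HasDerivAt (fun y : ℝ => 1 + (s : ℝ) ^ 2 * (y - 1)) ((s : ℝ) ^ 2) y := by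
        simpa using (((hasDerivAt_id y).sub_const 1).const_mul ((s : ℝ) ^ 2)).const_add 1
      have h3 := h1.mul (Polynomial.hasDerivAt (derivative (T ℝ (s : ℤ))) y)
      have h4 := (Polynomial.hasDerivAt (T ℝ (s : ℤ)) y).const_mul ((s : ℝ) ^ 2)
      have h5 := h3.sub h4
      have heq : (s : ℝ) ^ 2 * (derivative (T ℝ (s : ℤ))).eval y
            + (1 + (s : ℝ) ^ 2 * (y - 1)) * (derivative (derivative (T ℝ (s : ℤ)))).eval y
            - (s : ℝ) ^ 2 * (derivative (T ℝ (s : ℤ))).eval y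
          = (1 + (s : ℝ) ^ 2 * (y - 1)) * (derivative (derivative (T ℝ (s : ℤ)))).eval y := by
        ring
      rw [heq] at h5
      exact h5.hasDerivWithinAt
    · intro y hy
      rw [interior_Ici] at hy
      have h6 := chebT_deriv2_nonneg s hs y hy.le
      have h7 : (0:ℝ) ≤ 1 + (s : ℝ) ^ 2 * (y - 1) := by
        have : (0:ℝ) ≤ (s : ℝ) ^ 2 * (y - 1) := by
          apply mul_nonneg (by positivity)
          have := hy.out
          linarith [mem_Ioi.mp hy]
        linarith
      exact mul_nonneg h7 h6
  have h0 : g 1 = 0 := by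
    rw [hg]
    simp only
    rw [chebT_eval_one' s, chebT_deriv_eval_one s hs]
    ring
  have := hmono self_mem_Ici hx hx
  rw [h0] at this
  simp only [hg] at this
  linarith
end Facts
/-- `Ω(η) = tanh(√(2η))/√(2η)`. -/
noncomputable def OmegaEta (η : ℝ) : ℝ := Real.tanh (Real.sqrt (2 * η)) / Real.sqrt (2 * η)

/-- `η₀ = inf {η > 0 : η / Ω(η) = 1}`. -/
noncomputable def etaZero : ℝ := sInf {η : ℝ | 0 < η ∧ η / OmegaEta η = 1}

set_option maxHeartbeats 1600000 in
/-- Let `η ∈ (0, η₀)`, `s ≥ 1`, `ω₀ = 1 + η/s²`, `ω₁ = T_s(ω₀)/T_s'(ω₀)`,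
`A_s(z) = T_s(ω₀ + ω₁ z)/T_s(ω₀)`, and `δ ∈ (0, η e^{-η})`. Then for all `z ∈ [-δ, 0]`,
`(A_s(z) − 1)/z ≥ (1 − A_s(-δ))/δ > 0`, and consequently
`min(1, |z|)/(1 − A_s(z)²) ≤ δ/(1 − A_s(-δ))`. -/
theorem lower_bound_difference_quotient (η : ℝ) (hη : η ∈ Set.Ioo 0 etaZero)
    (s : ℕ) (hs : 1 ≤ s)
    (ω₀ ω₁ : ℝ) (hω₀ : ω₀ = 1 + η / (s : ℝ) ^ 2)
    (hω₁ : ω₁ = (Chebyshev.T ℝ (s : ℤ)).eval ω₀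
      / ((Polynomial.derivative (Chebyshev.T ℝ (s : ℤ))).eval ω₀))
    (A : ℝ → ℝ)
    (hA : ∀ z : ℝ, A z = (Chebyshev.T ℝ (s : ℤ)).eval (ω₀ + ω₁ * z)
      / (Chebyshev.T ℝ (s : ℤ)).eval ω₀)
    (δ : ℝ) (hδ : δ ∈ Set.Ioo 0 (η * Real.exp (-η))) :
    (∀ z ∈ Set.Icc (-δ) 0, z ≠ 0 → (1 - A (-δ)) / δ ≤ (A z - 1) / z) ∧
      0 < (1 - A (-δ)) / δ ∧
      ∀ z ∈ Set.Icc (-δ) 0, min 1 |z| / (1 - (A z) ^ 2) ≤ δ / (1 - A (-δ)) := by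
  obtain ⟨hη0, -⟩ := hη
  obtain ⟨hδ0, hδup⟩ := hδ
  have hspos : (0:ℝ) < s := by exact_mod_cast hs
  have hs2 : (0:ℝ) < (s:ℝ) ^ 2 := by positivity
  have hω₀gt : 1 < ω₀ := by
    rw [hω₀]
    have := div_pos hη0 hs2
    linarith
  have hω₀1 : 1 ≤ ω₀ := hω₀gt.le
  have hW : 0 < (T ℝ (s:ℤ)).eval ω₀ := lt_of_lt_of_le one_pos (chebT_ge_one s hs ω₀ hω₀1)
  have hT' : 0 < (derivative (T ℝ (s:ℤ))).eval ω₀ :=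
    lt_of_lt_of_le hs2 (chebT_deriv_ge s hs ω₀ hω₀1)
  have hω₁pos : 0 < ω₁ := by rw [hω₁]; exact div_pos hW hT'
  -- `δ * ω₁ ≤ ω₀ - 1`
  have hω₀sub : ω₀ - 1 = η / (s:ℝ) ^ 2 := by rw [hω₀]; ring
  have hkey := chebT_key s hs ω₀ hω₀1
  have hη_eq : 1 + (s:ℝ) ^ 2 * (ω₀ - 1) = 1 + η := by
    rw [hω₀sub]; field_simp
  rw [hη_eq] at hkey
  have hω₁le : ω₁ ≤ (1 + η) / (s:ℝ) ^ 2 := by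
    rw [hω₁, div_le_div_iff₀ hT' hs2]
    nlinarith
  have hE : η + 1 ≤ Real.exp η := Real.add_one_le_exp η
  have hEpos := Real.exp_pos η
  have hδle : δ ≤ η / Real.exp η := by
    rw [Real.exp_neg] at hδup
    rw [div_eq_mul_inv]
    linarith
  have hδω₁ : δ * ω₁ ≤ ω₀ - 1 := by
    have h2 : δ * ω₁ ≤ (η / Real.exp η) * ((1 + η) / (s:ℝ) ^ 2) :=
      mul_le_mul hδle hω₁le hω₁pos.le (by positivity)
    have h3 : (η / Real.exp η) * ((1 + η) / (s:ℝ) ^ 2) ≤ η / (s:ℝ) ^ 2 := by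
      rw [div_mul_div_comm, div_le_div_iff₀ (by positivity) hs2]
      nlinarith [mul_le_mul_of_nonneg_left hE (mul_pos hη0 hs2).le]
    rw [hω₀sub]
    linarith
  -- membership facts
  have hxmem : ∀ z ∈ Icc (-δ) 0, 1 ≤ ω₀ + ω₁ * z := by
    intro z hz
    have h1 : ω₁ * (-δ) ≤ ω₁ * z := mul_le_mul_of_nonneg_left hz.1 hω₁pos.le
    nlinarith
  have hApos : ∀ z ∈ Icc (-δ) 0, 0 < A z := by
    intro z hz
    rw [hA z]
    exact div_pos (lt_of_lt_of_le one_pos (chebT_ge_one s hs _ (hxmem z hz))) hW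
  have hAlt1 : ∀ z ∈ Icc (-δ) 0, z < 0 → A z < 1 := by
    intro z hz hzneg
    rw [hA z, div_lt_one hW]
    have hlt : ω₀ + ω₁ * z < ω₀ := by nlinarith
    exact chebT_strictMono s hs (hxmem z hz) (mem_Ici.mpr hω₀1) hlt
  have hmδ : (-δ : ℝ) ∈ Icc (-δ) 0 := ⟨le_refl _, by linarith⟩
  have hAδlt1 : A (-δ) < 1 := hAlt1 (-δ) hmδ (by linarith)
  -- convexity slope bound
  have hslope : ∀ z ∈ Icc (-δ) 0, (-z / δ) * (1 - A (-δ)) ≤ 1 - A z := by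
    intro z hz
    have hmem1 : ω₀ + ω₁ * (-δ) ∈ Ici (1:ℝ) := hxmem (-δ) hmδ
    have hmem2 : ω₀ ∈ Ici (1:ℝ) := hω₀1
    have ha : (0:ℝ) ≤ -z / δ := div_nonneg (by linarith [hz.2]) hδ0.le
    have hb : (0:ℝ) ≤ 1 + z / δ := by
      have h4 : -δ / δ ≤ z / δ := by
        apply div_le_div_of_nonneg_right hz.1 hδ0.le
      have h5 : -δ / δ = -1 := by rw [neg_div, div_self hδ0.ne']
      linarith
    have hab : (-z / δ) + (1 + z / δ) = 1 := by ring
    have hc := (chebT_convex s hs).2 hmem1 hmem2 ha hb hab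
    simp only [smul_eq_mul] at hc
    have harg : (-z / δ) * (ω₀ + ω₁ * (-δ)) + (1 + z / δ) * ω₀ = ω₀ + ω₁ * z := by
      field_simp
      ring
    rw [harg] at hc
    rw [hA z, hA (-δ)]
    set W := (T ℝ (s:ℤ)).eval ω₀
    set Tz := (T ℝ (s:ℤ)).eval (ω₀ + ω₁ * z)
    set Tδ := (T ℝ (s:ℤ)).eval (ω₀ + ω₁ * (-δ))
    have e1 : (-z / δ) * (1 - Tδ / W) = ((-z / δ) * (W - Tδ)) / W := by
      field_simp
    have e2 : 1 - Tz / W = (W - Tz) / W := by field_simp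
    have h7 : -z / δ * (W - Tδ) ≤ W - Tz := by nlinarith [hc]
    rw [e1, e2]
    exact div_le_div_of_nonneg_right h7 hW.le

  -- assemble
  have hpart2 : 0 < (1 - A (-δ)) / δ := div_pos (by linarith) hδ0
  refine ⟨?_, hpart2, ?_⟩
  · intro z hz hz0
    have hzneg : z < 0 := lt_of_le_of_ne hz.2 hz0
    have hmz : 0 < -z := by linarith
    have hform : (A z - 1) / z = (1 - A z) / (-z) := by
      rw [div_eq_div_iff (ne_of_lt hzneg) (ne_of_gt hmz)]
      ring
    rw [hform, le_div_iff₀ hmz]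
    have hsl := hslope z hz
    have e : (1 - A (-δ)) / δ * -z = -z / δ * (1 - A (-δ)) := by ring
    rw [e]
    exact hsl
  · intro z hz
    rcases hz.2.eq_or_lt with h0 | hzneg
    · -- z = 0
      subst h0
      have hA0 : A 0 = 1 := by
        rw [hA 0]
        rw [mul_zero, add_zero]
        exact div_self hW.ne'
      rw [hA0]
      norm_num
      exact div_nonneg hδ0.le (by linarith)
    · have h01 := hApos z hz
      have hlt := hAlt1 z hz hzneg
      have hd1 : 1 - A z ≤ 1 - A z ^ 2 := by nlinarith
      have hd0 := hslope z hz
      have hmz : 0 < -z := by linarith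
      have hdpos : 0 < -z / δ * (1 - A (-δ)) := mul_pos (div_pos hmz hδ0) (by linarith)
      have hmin : min 1 |z| ≤ -z := by
        rw [abs_of_neg hzneg]
        exact min_le_right _ _
      have step1 : min 1 |z| / (1 - A z ^ 2) ≤ (-z) / (-z / δ * (1 - A (-δ))) := by
        apply div_le_div₀ hmz.le hmin hdpos
        linarith
      have step2 : (-z) / (-z / δ * (1 - A (-δ))) = δ / (1 - A (-δ)) := by
        rw [div_eq_div_iff (ne_of_gt hdpos) (by linarith : (0:ℝ) < 1 - A (-δ)).ne']
        field_simp
      rw [step2] at step1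
      exact step1
end
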